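/- arXiv:1806.11233 — 3 statements merged into one kernel-verified Lean document; each statement's English description precedes it below -/
import Mathlib

section
/- The double Schubert polynomial satisfies $\mathfrak{S}_w(x; a) = \sum_{(u,v)} (-1)^{\ell(u)} \mathfrak{S}_{u^{-1}}(a)\, \mathfrak{S}_v(x)$ for $w \in S_+$, where the sum is over length-additive factorizations $w = uv$ with $\ell(w) = \ell(u) + \ell(v)$. -/
open MvPolynomial

/-- The group `S₊` of permutations of `ℕ` moving only finitely many elements
(the positive integers are relabeled `0, 1, 2, …`). -/
def SPlus : Subgroup (Equiv.Perm ℕ) where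
  carrier := {w | {i : ℕ | w i ≠ i}.Finite}
  one_mem' := by
    have h : {i : ℕ | (1 : Equiv.Perm ℕ) i ≠ i} = ∅ := by ext i; simp
    show ({i : ℕ | (1 : Equiv.Perm ℕ) i ≠ i}).Finite
    rw [h]; exact Set.finite_empty
  mul_mem' := by
    intro a b ha hb
    show ({i : ℕ | (a * b) i ≠ i}).Finite
    refine (Set.Finite.union ha hb).subset ?_
    intro j hj
    simp only [Set.mem_setOf_eq] at hj
    by_contra hc
    simp only [Set.mem_union, Set.mem_setOf_eq, not_or, not_not] at hc
    exact hj (by rw [Equiv.Perm.mul_apply, hc.2, hc.1])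
  inv_mem' := by
    intro a ha
    show ({i : ℕ | a⁻¹ i ≠ i}).Finite
    have h : {i : ℕ | a⁻¹ i ≠ i} = {i : ℕ | a i ≠ i} := by
      ext i
      simp only [Set.mem_setOf_eq, ne_eq, Equiv.Perm.inv_eq_iff_eq]
      exact not_congr eq_comm
    rw [h]; exact ha

/-- The simple transposition `s_i = (i, i+1)` as an element of `S₊`. -/
def sN (i : ℕ) : SPlus :=
  ⟨Equiv.swap i (i + 1), by
    show ({j : ℕ | Equiv.swap i (i + 1) j ≠ j}).Finite
    refine ((Set.finite_singleton (i + 1)).insert i).subset ?_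
    intro j hj
    simp only [Set.mem_setOf_eq] at hj
    by_contra hc
    simp only [Set.mem_insert_iff, Set.mem_singleton_iff, not_or] at hc
    exact hj (Equiv.swap_apply_of_ne_of_ne hc.1 hc.2)⟩

/-- Coxeter length = number of inversions. -/
noncomputable def lenS (w : SPlus) : ℕ :=
  Nat.card {p : ℕ × ℕ | p.1 < p.2 ∧ (w : Equiv.Perm ℕ) p.2 < (w : Equiv.Perm ℕ) p.1}

/-- The defining properties of the family of Schubert polynomials `𝔖_w`, `w ∈ S₊`:
`𝔖_id = 1`; `𝔖_w` is homogeneous of degree `ℓ(w)`; and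
`A_i 𝔖_w = 𝔖_{w sᵢ}` if `ℓ(w sᵢ) < ℓ(w)` and `A_i 𝔖_w = 0` otherwise, where the
divided difference relations are expressed via
`(x_i - x_{i+1}) 𝔖_{w sᵢ} = 𝔖_w - s_i 𝔖_w` resp. `s_i 𝔖_w = 𝔖_w`. -/
def SchubertFamily (S : SPlus → MvPolynomial ℕ ℚ) : Prop :=
  S 1 = 1 ∧
  (∀ w : SPlus, (S w).IsHomogeneous (lenS w)) ∧
  (∀ (w : SPlus) (i : ℕ),
    if lenS (w * sN i) < lenS w then
      (X i - X (i + 1)) * S (w * sN i)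
        = S w - rename (fun j => Equiv.swap i (i + 1) j) (S w)
    else rename (fun j => Equiv.swap i (i + 1) j) (S w) = S w)

/-- The ring `ℚ[x; a]` of double Schubert polynomials: the `x`-variables are
indexed by `Sum.inl`, the `a`-variables by `Sum.inr`. -/
abbrev DR := MvPolynomial (ℕ ⊕ ℕ) ℚ

/-- The exchange of `x_i` and `x_{i+1}`. -/
noncomputable def sx (i : ℕ) : DR →ₐ[ℚ] DR :=
  rename (fun v => Equiv.swap (Sum.inl i : ℕ ⊕ ℕ) (Sum.inl (i + 1)) v)

/-- The exchange of `a_i` and `a_{i+1}`. -/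
noncomputable def sa (i : ℕ) : DR →ₐ[ℚ] DR :=
  rename (fun v => Equiv.swap (Sum.inr i : ℕ ⊕ ℕ) (Sum.inr (i + 1)) v)

/-- The substitution setting `x_i = a_i` for all `i`. -/
noncomputable def setXtoA : DR →ₐ[ℚ] DR :=
  rename (Sum.elim Sum.inr Sum.inr)

/-- The defining properties of the family of double Schubert polynomials
`𝔖_w(x; a)`, `w ∈ S₊` (Theorem `thm:double`): `𝔖_id = 1`; `𝔖_w(a; a) = 0` for
`w ≠ id`; and `A_i^x 𝔖_w = 𝔖_{w sᵢ}` if `ℓ(w sᵢ) < ℓ(w)`, `A_i^x 𝔖_w = 0`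
otherwise. -/
def DoubleSchubertFamily (D : SPlus → DR) : Prop :=
  D 1 = 1 ∧
  (∀ w : SPlus, w ≠ 1 → setXtoA (D w) = 0) ∧
  (∀ (w : SPlus) (i : ℕ),
    if lenS (w * sN i) < lenS w then
      (X (Sum.inl i) - X (Sum.inl (i + 1))) * D (w * sN i) = D w - sx i (D w)
    else sx i (D w) = D w)

namespace SchubAux

abbrev P := Equiv.Perm ℕ

theorem _root_.Equiv.Perm.apply_inv_self {α : Type*} (f : Equiv.Perm α) (x : α) :
    f (f⁻¹ x) = x := f.apply_symm_apply x

theorem _root_.Equiv.Perm.inv_apply_self {α : Type*} (f : Equiv.Perm α) (x : α) :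
    f⁻¹ (f x) = x := f.symm_apply_apply x

lemma coe_mul_apply (u v : SPlus) (k : ℕ) : ((u * v : SPlus) : P) k = (u : P) ((v : P) k) := rfl

lemma coe_one_apply (k : ℕ) : ((1 : SPlus) : P) k = k := rfl

lemma coe_inv (w : SPlus) : ((w⁻¹ : SPlus) : P) = (w : P)⁻¹ := rfl

/-- The set of inversions of a permutation. -/
def invSet (w : SPlus) : Set (ℕ × ℕ) := {p | p.1 < p.2 ∧ (w : P) p.2 < (w : P) p.1}

lemma lenS_eq_ncard (w : SPlus) : lenS w = (invSet w).ncard := Nat.card_coe_set_eq _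

lemma supp_finite (w : SPlus) : {i : ℕ | (w : P) i ≠ i}.Finite := w.2

lemma apply_mem_supp {w : SPlus} {i : ℕ} (h : (w : P) i ≠ i) :
    (w : P) ((w : P) i) ≠ (w : P) i :=
  fun hc => h ((w : P).injective hc)

noncomputable def bnd (w : SPlus) : ℕ := (supp_finite w).toFinset.sup id + 1

lemma lt_bnd_of_mem {w : SPlus} {i : ℕ} (h : (w : P) i ≠ i) : i < bnd w := by
  have : i ∈ (supp_finite w).toFinset := (Set.Finite.mem_toFinset _).2 h
  exact Nat.lt_succ_of_le (Finset.le_sup (f := id) this)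

lemma invSet_subset (w : SPlus) : invSet w ⊆ Set.Iio (bnd w) ×ˢ Set.Iio (bnd w) := by
  rintro ⟨i, j⟩ ⟨hij, hw⟩
  simp only [invSet, Set.mem_setOf_eq] at hij hw
  have hj : j < bnd w := by
    by_cases hjs : (w : P) j = j
    · rw [hjs] at hw
      have hi : (w : P) i ≠ i := by intro hii; rw [hii] at hw; omega
      exact lt_trans hw (lt_bnd_of_mem (apply_mem_supp hi))
    · exact lt_bnd_of_mem hjs
  exact ⟨lt_trans hij hj, hj⟩

lemma invSet_finite (w : SPlus) : (invSet w).Finite :=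
  ((Set.finite_Iio _).prod (Set.finite_Iio _)).subset (invSet_subset w)

/-- "Double inversions" of the pair `(u, v)`: inversions of `v` undone by `u`. -/
def bSet (u v : SPlus) : Set (ℕ × ℕ) :=
  {p | p.1 < p.2 ∧ (v : P) p.2 < (v : P) p.1 ∧
    ((u * v : SPlus) : P) p.1 < ((u * v : SPlus) : P) p.2}

def cSet (u v : SPlus) : Set (ℕ × ℕ) :=
  {p | p.1 < p.2 ∧ (v : P) p.1 < (v : P) p.2 ∧
    ((u * v : SPlus) : P) p.2 < ((u * v : SPlus) : P) p.1}

lemma bSet_subset (u v : SPlus) : bSet u v ⊆ invSet v := fun p hp => ⟨hp.1, hp.2.1⟩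

lemma cSet_subset (u v : SPlus) : cSet u v ⊆ invSet (u * v) := fun p hp => ⟨hp.1, hp.2.2⟩

lemma bSet_finite (u v : SPlus) : (bSet u v).Finite :=
  (invSet_finite v).subset (bSet_subset u v)

lemma cSet_finite (u v : SPlus) : (cSet u v).Finite :=
  (invSet_finite (u * v)).subset (cSet_subset u v)

lemma apply_ne {w : SPlus} {i j : ℕ} (h : i ≠ j) : (w : P) i ≠ (w : P) j :=
  fun hc => h ((w : P).injective hc)

/-- The key length identity: `ℓ(uv) + 2·#B = ℓ(u) + ℓ(v)`. -/
lemma key (u v : SPlus) :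
    lenS (u * v) + 2 * (bSet u v).ncard = lenS u + lenS v := by
  classical
  have fb := bSet_finite u v
  have fc := cSet_finite u v
  have fm : (invSet (u * v) ∩ invSet v).Finite :=
    (invSet_finite v).subset Set.inter_subset_right
  have h1 : invSet (u * v) = (invSet (u * v) ∩ invSet v) ∪ cSet u v := by
    ext ⟨i, j⟩
    simp only [invSet, cSet, Set.mem_union, Set.mem_inter_iff, Set.mem_setOf_eq]
    constructor
    · rintro ⟨hij, huv⟩
      rcases lt_or_gt_of_ne (apply_ne (w := v) (Nat.ne_of_lt hij)) with h | h
      · exact Or.inr ⟨hij, h, huv⟩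
      · exact Or.inl ⟨⟨hij, huv⟩, hij, h⟩
    · rintro (⟨⟨hij, huv⟩, _⟩ | ⟨hij, _, huv⟩) <;> exact ⟨hij, huv⟩
  have h2 : invSet v = (invSet (u * v) ∩ invSet v) ∪ bSet u v := by
    ext ⟨i, j⟩
    simp only [invSet, bSet, Set.mem_union, Set.mem_inter_iff, Set.mem_setOf_eq]
    constructor
    · rintro ⟨hij, hv⟩
      rcases lt_or_gt_of_ne (apply_ne (w := u * v) (Nat.ne_of_lt hij)) with h | h
      · exact Or.inr ⟨hij, hv, h⟩
      · exact Or.inl ⟨⟨hij, h⟩, hij, hv⟩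
    · rintro (⟨⟨_, _⟩, hij, hv⟩ | ⟨hij, hv, _⟩) <;> exact ⟨hij, hv⟩
  have d1 : Disjoint (invSet (u * v) ∩ invSet v) (cSet u v) := by
    rw [Set.disjoint_left]
    intro p hp hp'
    have h1 := hp.2.2
    have h2 := hp'.2.1
    omega
  have d2 : Disjoint (invSet (u * v) ∩ invSet v) (bSet u v) := by
    rw [Set.disjoint_left]
    intro p hp hp'
    have h1 := hp.1.2
    have h2 := hp'.2.2
    omega
  have dbc : Disjoint (bSet u v) (cSet u v) := by
    rw [Set.disjoint_left]
    intro p hp hp'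
    have h1 := hp.2.1
    have h2 := hp'.2.1
    omega
  set Φ : ℕ × ℕ → ℕ × ℕ := fun p =>
    if (v : P) p.1 < (v : P) p.2 then ((v : P) p.1, (v : P) p.2)
    else ((v : P) p.2, (v : P) p.1) with hΦ
  have himg : Φ '' (bSet u v ∪ cSet u v) = invSet u := by
    ext ⟨a, b⟩
    constructor
    · rintro ⟨q, hq, heq⟩
      simp only [hΦ] at heq
      rcases hq with hb | hc
      · rw [if_neg (by have := hb.2.1; omega : ¬ (v : P) q.1 < (v : P) q.2),
          Prod.mk.injEq] at heq
        obtain ⟨rfl, rfl⟩ := heq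
        refine ⟨hb.2.1, ?_⟩
        have h3 := hb.2.2
        rw [coe_mul_apply, coe_mul_apply] at h3
        exact h3
      · rw [if_pos hc.2.1, Prod.mk.injEq] at heq
        obtain ⟨rfl, rfl⟩ := heq
        refine ⟨hc.2.1, ?_⟩
        have h3 := hc.2.2
        rw [coe_mul_apply, coe_mul_apply] at h3
        exact h3
    · rintro ⟨hab, hu⟩
      have hvi : (v : P) ((v : P)⁻¹ a) = a := Equiv.Perm.apply_inv_self _ _
      have hvj : (v : P) ((v : P)⁻¹ b) = b := Equiv.Perm.apply_inv_self _ _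
      have hij : (v : P)⁻¹ a ≠ (v : P)⁻¹ b := by
        intro h; rw [h, hvj] at hvi; omega
      rcases lt_or_gt_of_ne hij with h | h
      · refine ⟨((v : P)⁻¹ a, (v : P)⁻¹ b), Or.inr ⟨h, ?_, ?_⟩, ?_⟩
        · rw [hvi, hvj]; exact hab
        · rw [coe_mul_apply, coe_mul_apply, hvi, hvj]; exact hu
        · simp only [hΦ]
          rw [if_pos (by rw [hvi, hvj]; exact hab), hvi, hvj]
      · refine ⟨((v : P)⁻¹ b, (v : P)⁻¹ a), Or.inl ⟨h, ?_, ?_⟩, ?_⟩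
        · rw [hvi, hvj]; exact hab
        · rw [coe_mul_apply, coe_mul_apply, hvi, hvj]; exact hu
        · simp only [hΦ]
          rw [if_neg (by rw [hvi, hvj]; omega), hvi, hvj]
  have hinjOn : Set.InjOn Φ (bSet u v ∪ cSet u v) := by
    intro p hp q hq heq
    have h1 : p.1 < p.2 := by rcases hp with h | h; exacts [h.1, h.1]
    have h2 : q.1 < q.2 := by rcases hq with h | h; exacts [h.1, h.1]
    simp only [hΦ] at heq
    by_cases c1 : (v : P) p.1 < (v : P) p.2 <;> by_cases c2 : (v : P) q.1 < (v : P) q.2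
    · rw [if_pos c1, if_pos c2, Prod.mk.injEq] at heq
      exact Prod.ext ((v : P).injective heq.1) ((v : P).injective heq.2)
    · rw [if_pos c1, if_neg c2, Prod.mk.injEq] at heq
      have e1 := (v : P).injective heq.1
      have e2 := (v : P).injective heq.2
      exfalso; omega
    · rw [if_neg c1, if_pos c2, Prod.mk.injEq] at heq
      have e1 := (v : P).injective heq.1
      have e2 := (v : P).injective heq.2
      exfalso; omega
    · rw [if_neg c1, if_neg c2, Prod.mk.injEq] at heq
      exact Prod.ext ((v : P).injective heq.2) ((v : P).injective heq.1)
  have e3 : (invSet u).ncard = (bSet u v).ncard + (cSet u v).ncard := by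
    rw [← himg, Set.ncard_image_of_injOn hinjOn, Set.ncard_union_eq dbc fb fc]
  have e1 : (invSet (u * v)).ncard
      = (invSet (u * v) ∩ invSet v).ncard + (cSet u v).ncard := by
    conv_lhs => rw [h1]
    rw [Set.ncard_union_eq d1 fm fc]
  have e2 : (invSet v).ncard = (invSet (u * v) ∩ invSet v).ncard + (bSet u v).ncard := by
    conv_lhs => rw [h2]
    rw [Set.ncard_union_eq d2 fm fb]
  rw [lenS_eq_ncard, lenS_eq_ncard, lenS_eq_ncard]
  omega

lemma lenS_mul_le (u v : SPlus) : lenS (u * v) ≤ lenS u + lenS v := by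
  have := key u v; omega

lemma lenS_inv (w : SPlus) : lenS w⁻¹ = lenS w := by
  rw [lenS_eq_ncard, lenS_eq_ncard]
  have himg : (fun p : ℕ × ℕ => ((w : P) p.2, (w : P) p.1)) '' invSet w = invSet w⁻¹ := by
    ext ⟨a, b⟩
    constructor
    · rintro ⟨⟨i, j⟩, ⟨hij, hw⟩, heq⟩
      cases heq
      refine ⟨hw, ?_⟩
      rw [coe_inv]
      simp only [Equiv.Perm.inv_apply_self]
      exact hij
    · rintro ⟨hab, hw⟩
      rw [coe_inv] at hw
      refine ⟨((w : P)⁻¹ b, (w : P)⁻¹ a), ⟨hw, ?_⟩, ?_⟩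
      · simp only [Equiv.Perm.apply_inv_self]; exact hab
      · simp only [Equiv.Perm.apply_inv_self]
  rw [← himg, Set.ncard_image_of_injOn]
  rintro ⟨i, j⟩ - ⟨k, l⟩ - heq
  simp only [Prod.mk.injEq] at heq
  obtain ⟨e1, e2⟩ := heq
  rw [Prod.mk.injEq]
  exact ⟨(w : P).injective e2, (w : P).injective e1⟩

end SchubAux
namespace SchubAux

lemma sN_coe (i : ℕ) : ((sN i : SPlus) : P) = Equiv.swap i (i + 1) := rfl

lemma sN_mul_self (i : ℕ) : sN i * sN i = 1 :=
  Subtype.ext (Equiv.swap_mul_self i (i + 1))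

lemma sN_inv (i : ℕ) : (sN i)⁻¹ = sN i :=
  inv_eq_of_mul_eq_one_left (sN_mul_self i)

lemma sN_ne_one (i : ℕ) : sN i ≠ 1 := by
  intro h
  have : ((sN i : SPlus) : P) i = i := by rw [h]; rfl
  rw [sN_coe, Equiv.swap_apply_left] at this
  omega

lemma swap_pair {i a b : ℕ} (hab : a < b)
    (h : Equiv.swap i (i + 1) b < Equiv.swap i (i + 1) a) : a = i ∧ b = i + 1 := by
  rw [Equiv.swap_apply_def, Equiv.swap_apply_def] at h
  split_ifs at h <;> omega

lemma invSet_sN (i : ℕ) : invSet (sN i) = {(i, i + 1)} := by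
  ext p
  constructor
  · intro hp
    have h1 := hp.1
    have h2 := hp.2
    rw [sN_coe] at h2
    have := swap_pair h1 h2
    show p = (i, i + 1)
    exact Prod.ext this.1 this.2
  · intro hp
    have hp' : p = (i, i + 1) := hp
    subst hp'
    refine ⟨by omega, ?_⟩
    rw [sN_coe]
    show Equiv.swap i (i+1) (i+1) < Equiv.swap i (i+1) i
    rw [Equiv.swap_apply_left, Equiv.swap_apply_right]
    omega

lemma lenS_sN (i : ℕ) : lenS (sN i) = 1 := by
  rw [lenS_eq_ncard, invSet_sN, Set.ncard_singleton]

lemma lenS_one : lenS 1 = 0 := by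
  rw [lenS_eq_ncard]
  have : invSet (1 : SPlus) = ∅ := by
    ext p
    simp only [invSet, Set.mem_setOf_eq, Set.mem_empty_iff_false, iff_false, not_and]
    intro h1
    rw [coe_one_apply, coe_one_apply]
    omega
  rw [this, Set.ncard_empty]

/-- Right multiplication by `s_i`, descent case. -/
lemma lenS_mul_sN_desc {w : SPlus} {i : ℕ} (h : (w : P) (i + 1) < (w : P) i) :
    lenS (w * sN i) + 1 = lenS w := by
  have hk := key w (sN i)
  rw [lenS_sN] at hk
  have hb : bSet w (sN i) = {(i, i + 1)} := by
    ext p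
    constructor
    · intro hp
      have h1 := hp.1
      have h2 := hp.2.1
      rw [sN_coe] at h2
      have := swap_pair h1 h2
      show p = (i, i + 1)
      exact Prod.ext this.1 this.2
    · intro hp
      have hp' : p = (i, i + 1) := hp
      subst hp'
      refine ⟨by omega, ?_, ?_⟩
      · rw [sN_coe]
        show Equiv.swap i (i+1) (i+1) < Equiv.swap i (i+1) i
        rw [Equiv.swap_apply_left, Equiv.swap_apply_right]
        omega
      · rw [coe_mul_apply, coe_mul_apply, sN_coe]
        show (w : P) (Equiv.swap i (i+1) i) < (w : P) (Equiv.swap i (i+1) (i+1))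
        rw [Equiv.swap_apply_left, Equiv.swap_apply_right]
        exact h
  rw [hb, Set.ncard_singleton] at hk
  omega

/-- Right multiplication by `s_i`, ascent case. -/
lemma lenS_mul_sN_asc {w : SPlus} {i : ℕ} (h : (w : P) i < (w : P) (i + 1)) :
    lenS (w * sN i) = lenS w + 1 := by
  have hk := key w (sN i)
  rw [lenS_sN] at hk
  have hb : bSet w (sN i) = ∅ := by
    ext p
    simp only [Set.mem_empty_iff_false, iff_false]
    intro hp
    have h1 := hp.1
    have h2 := hp.2.1
    rw [sN_coe] at h2
    obtain ⟨f1, f2⟩ : p.1 = i ∧ p.2 = i + 1 := swap_pair h1 h2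
    have h3 := hp.2.2
    rw [coe_mul_apply, coe_mul_apply, sN_coe, f1, f2, Equiv.swap_apply_left,
      Equiv.swap_apply_right] at h3
    omega
  rw [hb, Set.ncard_empty] at hk
  omega

lemma rdesc_iff {w : SPlus} {i : ℕ} :
    lenS (w * sN i) < lenS w ↔ (w : P) (i + 1) < (w : P) i := by
  constructor
  · intro h
    by_contra hc
    have hne : (w : P) i ≠ (w : P) (i + 1) := apply_ne (by omega)
    have := lenS_mul_sN_asc (by omega : (w : P) i < (w : P) (i + 1))
    omega
  · intro h
    have := lenS_mul_sN_desc h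
    omega

lemma rdesc_len {w : SPlus} {i : ℕ} (h : lenS (w * sN i) < lenS w) :
    lenS (w * sN i) + 1 = lenS w :=
  lenS_mul_sN_desc (rdesc_iff.1 h)

lemma rasc_len {w : SPlus} {i : ℕ} (h : ¬ lenS (w * sN i) < lenS w) :
    lenS (w * sN i) = lenS w + 1 := by
  by_contra hc
  have hne : (w : P) i ≠ (w : P) (i + 1) := apply_ne (by omega)
  rcases lt_or_gt_of_ne hne with h' | h'
  · exact hc (lenS_mul_sN_asc h')
  · exact h (rdesc_iff.2 h')

/-- Left multiplication by `s_i`, descent case. -/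
lemma lenS_sN_mul_desc {w : SPlus} {i : ℕ} (h : (w : P)⁻¹ (i + 1) < (w : P)⁻¹ i) :
    lenS (sN i * w) + 1 = lenS w := by
  have hk := key (sN i) w
  rw [lenS_sN] at hk
  have hb : bSet (sN i) w = {((w : P)⁻¹ (i + 1), (w : P)⁻¹ i)} := by
    ext p
    constructor
    · intro hp
      have h2 := hp.2.1
      have h3 := hp.2.2
      rw [coe_mul_apply, coe_mul_apply, sN_coe] at h3
      obtain ⟨e1, e2⟩ := swap_pair h2 h3
      show p = _
      refine Prod.ext ?_ ?_
      · show p.1 = (w : P)⁻¹ (i + 1)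
        rw [← e2, Equiv.Perm.inv_apply_self]
      · show p.2 = (w : P)⁻¹ i
        rw [← e1, Equiv.Perm.inv_apply_self]
    · intro hp
      have hp' : p = ((w : P)⁻¹ (i + 1), (w : P)⁻¹ i) := hp
      subst hp'
      have e1 : (w : P) ((w : P)⁻¹ (i+1)) = i + 1 := Equiv.Perm.apply_inv_self _ _
      have e2 : (w : P) ((w : P)⁻¹ i) = i := Equiv.Perm.apply_inv_self _ _
      refine ⟨h, ?_, ?_⟩
      · show (w : P) ((w : P)⁻¹ i) < (w : P) ((w : P)⁻¹ (i+1))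
        rw [e1, e2]; omega
      · rw [coe_mul_apply, coe_mul_apply, sN_coe]
        show Equiv.swap i (i+1) ((w : P) ((w : P)⁻¹ (i+1))) <
          Equiv.swap i (i+1) ((w : P) ((w : P)⁻¹ i))
        rw [e1, e2, Equiv.swap_apply_left, Equiv.swap_apply_right]
        omega
  rw [hb, Set.ncard_singleton] at hk
  omega

/-- Left multiplication by `s_i`, ascent case. -/
lemma lenS_sN_mul_asc {w : SPlus} {i : ℕ} (h : (w : P)⁻¹ i < (w : P)⁻¹ (i + 1)) :
    lenS (sN i * w) = lenS w + 1 := by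
  have hk := key (sN i) w
  rw [lenS_sN] at hk
  have hb : bSet (sN i) w = ∅ := by
    ext p
    simp only [Set.mem_empty_iff_false, iff_false]
    intro hp
    have h2 := hp.2.1
    have h3 := hp.2.2
    rw [coe_mul_apply, coe_mul_apply, sN_coe] at h3
    obtain ⟨e1, e2⟩ := swap_pair h2 h3
    have f1 : p.1 = (w : P)⁻¹ (i + 1) := by rw [← e2, Equiv.Perm.inv_apply_self]
    have f2 : p.2 = (w : P)⁻¹ i := by rw [← e1, Equiv.Perm.inv_apply_self]
    have := hp.1
    omega
  rw [hb, Set.ncard_empty] at hk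
  omega

lemma ldesc_iff {w : SPlus} {i : ℕ} :
    lenS (sN i * w) < lenS w ↔ (w : P)⁻¹ (i + 1) < (w : P)⁻¹ i := by
  constructor
  · intro h
    by_contra hc
    have hne : (w : P)⁻¹ i ≠ (w : P)⁻¹ (i + 1) := fun hc' => by
      have := (w : P)⁻¹.injective hc'; omega
    have := lenS_sN_mul_asc (by omega : (w : P)⁻¹ i < (w : P)⁻¹ (i + 1))
    omega
  · intro h
    have := lenS_sN_mul_desc h
    omega

lemma ldesc_len {w : SPlus} {i : ℕ} (h : lenS (sN i * w) < lenS w) :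
    lenS (sN i * w) + 1 = lenS w :=
  lenS_sN_mul_desc (ldesc_iff.1 h)

lemma lasc_len {w : SPlus} {i : ℕ} (h : ¬ lenS (sN i * w) < lenS w) :
    lenS (sN i * w) = lenS w + 1 := by
  by_contra hc
  have hne : (w : P)⁻¹ i ≠ (w : P)⁻¹ (i + 1) := fun hc' => by
    have := (w : P)⁻¹.injective hc'; omega
  rcases lt_or_gt_of_ne hne with h' | h'
  · exact hc (lenS_sN_mul_asc h')
  · exact h (ldesc_iff.2 h')

lemma exists_inv_of_ne_one {w : SPlus} (h : w ≠ 1) :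
    ∃ p ∈ invSet w, ∀ k, (w : P) k ≠ k → k ≤ p.2 := by
  have hne : ((supp_finite w).toFinset).Nonempty := by
    rw [Finset.nonempty_iff_ne_empty]
    intro hc
    apply h
    apply Subtype.ext
    apply Equiv.ext
    intro k
    by_contra hk
    have : k ∈ (supp_finite w).toFinset := (Set.Finite.mem_toFinset _).2 hk
    rw [hc] at this
    exact absurd this (Finset.notMem_empty _)
  set j := ((supp_finite w).toFinset).max' hne with hj
  have hmem' : ∀ k, (w : P) k ≠ k → k ∈ (supp_finite w).toFinset := fun k hk =>
    (Set.Finite.mem_toFinset _).2 hk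
  have hjmem : j ∈ (supp_finite w).toFinset := Finset.max'_mem _ _
  have hjs : (w : P) j ≠ j := (Set.Finite.mem_toFinset _).1 hjmem
  have hwjle : (w : P) j ≤ j := Finset.le_max' _ _ (hmem' _ (apply_mem_supp hjs))
  have hwj : (w : P) j < j := by omega
  have hvi : (w : P) ((w : P)⁻¹ j) = j := Equiv.Perm.apply_inv_self _ _
  have hine : (w : P)⁻¹ j ≠ j := by
    intro hc; rw [hc] at hvi; exact hjs hvi
  have hisupp : (w : P) ((w : P)⁻¹ j) ≠ (w : P)⁻¹ j := by rw [hvi]; omega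
  have hile : (w : P)⁻¹ j ≤ j := Finset.le_max' _ _ (hmem' _ hisupp)
  refine ⟨((w : P)⁻¹ j, j), ⟨by omega, ?_⟩, ?_⟩
  · show (w : P) j < (w : P) ((w : P)⁻¹ j)
    rw [hvi]; omega
  intro k hk
  exact Finset.le_max' _ _ (hmem' _ hk)

lemma eq_one_of_lenS_zero {w : SPlus} (h : lenS w = 0) : w = 1 := by
  by_contra hne
  obtain ⟨p, hp, -⟩ := exists_inv_of_ne_one hne
  rw [lenS_eq_ncard, Set.ncard_eq_zero (invSet_finite w)] at h
  rw [h] at hp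
  exact absurd hp (Set.notMem_empty _)

lemma exists_rdesc {w : SPlus} (h : w ≠ 1) : ∃ i, (w : P) (i + 1) < (w : P) i := by
  by_contra hc
  push_neg at hc
  have hmono : ∀ i, (w : P) i < (w : P) (i + 1) := fun i =>
    lt_of_le_of_ne (hc i) (apply_ne (by omega))
  have hsm : StrictMono (w : P) := strictMono_nat_of_lt_succ hmono
  have hge : ∀ i, i ≤ (w : P) i := fun i => hsm.le_apply
  have hfix : ∀ i, (w : P) i = i := by
    intro i
    induction i using Nat.strong_induction_on with
    | _ i ih =>
      have h1 : (w : P)⁻¹ i ≤ i := by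
        have := hge ((w : P)⁻¹ i)
        rwa [Equiv.Perm.apply_inv_self] at this
      rcases eq_or_lt_of_le h1 with heq | hlt
      · conv_lhs => rw [← heq]
        rw [Equiv.Perm.apply_inv_self]
      · have := ih _ hlt
        have h2 : (w : P) ((w : P)⁻¹ i) = i := Equiv.Perm.apply_inv_self _ _
        rw [this] at h2
        omega
  exact h (Subtype.ext (Equiv.ext hfix))

lemma eq_sN_of_lenS_one {w : SPlus} (h : lenS w = 1) : ∃ i, w = sN i := by
  have hne : w ≠ 1 := by
    intro hc; rw [hc, lenS_one] at h; omega
  obtain ⟨i, hi⟩ := exists_rdesc hne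
  have hd := lenS_mul_sN_desc hi
  have h0 : lenS (w * sN i) = 0 := by omega
  have := eq_one_of_lenS_zero h0
  refine ⟨i, ?_⟩
  have hw : w = (sN i)⁻¹ := mul_eq_one_iff_eq_inv.mp this
  rw [hw, sN_inv]

end SchubAux
namespace SchubAux

attribute [local instance] Classical.propDecidable

lemma invSet_subset_of_additive {u v : SPlus}
    (h : lenS (u * v) = lenS u + lenS v) : invSet v ⊆ invSet (u * v) := by
  have hk := key u v
  have hb : bSet u v = ∅ := by
    rw [← Set.ncard_eq_zero (bSet_finite u v)]
    omega
  intro p hp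
  have hp1 := hp.1
  have hp2 := hp.2
  refine ⟨hp1, ?_⟩
  have hne : ((u * v : SPlus) : P) p.1 ≠ ((u * v : SPlus) : P) p.2 :=
    apply_ne (by omega)
  rcases lt_or_gt_of_ne hne with h' | h'
  · exfalso
    have : p ∈ bSet u v := ⟨hp.1, hp.2, h'⟩
    rw [hb] at this
    exact absurd this (Set.notMem_empty _)
  · exact h'

/-- The set of length-additive factorizations of `w`. -/
def facSet (w : SPlus) : Set (SPlus × SPlus) :=
  {p | w = p.1 * p.2 ∧ lenS w = lenS p.1 + lenS p.2}

lemma facSet_finite (w : SPlus) : (facSet w).Finite := by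
  classical
  set N := bnd w with hN
  have hV : {v : SPlus | ∀ k, (v : P) k ≠ k → k < N}.Finite := by
    rw [← Set.finite_coe_iff]
    have hbd : ∀ v : {v : SPlus | ∀ k, (v : P) k ≠ k → k < N}, ∀ k : Fin N,
        ((v.1 : P) k : ℕ) < N := by
      intro v k
      by_contra hge
      push_neg at hge
      have h1 : (v.1 : P) ((v.1 : P) k) = (v.1 : P) k := by
        by_contra hne'
        have := v.2 _ hne'
        omega
      have h2 : (v.1 : P) (k : ℕ) = k := (v.1 : P).injective h1
      have hk2 := k.2
      omega
    refine Finite.of_injective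
      (fun v => (fun k : Fin N => (⟨(v.1 : P) k, hbd v k⟩ : Fin N))) ?_
    intro v v' hvv
    ext1
    apply Subtype.ext
    apply Equiv.ext
    intro k
    by_cases hk : k < N
    · have := congrFun hvv ⟨k, hk⟩
      simpa using this
    · push_neg at hk
      have e1 : (v.1 : P) k = k := by
        by_contra hne'; have := v.2 _ hne'; omega
      have e2 : (v'.1 : P) k = k := by
        by_contra hne'; have := v'.2 _ hne'; omega
      rw [e1, e2]
  apply Set.Finite.of_finite_image (f := fun p : SPlus × SPlus => p.2)
  · apply hV.subset
    rintro v ⟨p, hp, rfl⟩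
    intro k hk
    dsimp only at hk
    have hadd : lenS (p.1 * p.2) = lenS p.1 + lenS p.2 := by
      rw [← hp.1]; exact hp.2
    have hsub : invSet p.2 ⊆ invSet w := by
      have := invSet_subset_of_additive hadd
      rwa [← hp.1] at this
    have hp2ne : p.2 ≠ 1 := by
      intro hc
      rw [hc] at hk
      exact hk (coe_one_apply k)
    obtain ⟨q, hq, hmax⟩ := exists_inv_of_ne_one hp2ne
    have hqw : q ∈ invSet w := hsub hq
    have hqN := invSet_subset w hqw
    have h2 : q.2 < N := hqN.2
    have := hmax k hk
    omega
  · intro p hp q hq h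
    dsimp only at h
    have h1 : p.1 = q.1 := by
      have e1 : p.1 = w * p.2⁻¹ := by rw [hp.1]; group
      have e2 : q.1 = w * q.2⁻¹ := by rw [hq.1]; group
      rw [e1, e2, h]
    exact Prod.ext h1 h

/-- The finset of length-additive factorizations. -/
noncomputable def FacF (w : SPlus) : Finset (SPlus × SPlus) := (facSet_finite w).toFinset

lemma mem_FacF {w : SPlus} {p : SPlus × SPlus} :
    p ∈ FacF w ↔ w = p.1 * p.2 ∧ lenS w = lenS p.1 + lenS p.2 :=
  Set.Finite.mem_toFinset _

lemma FacF_one : FacF 1 = {((1 : SPlus), (1 : SPlus))} := by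
  ext p
  rw [mem_FacF, Finset.mem_singleton, lenS_one]
  constructor
  · rintro ⟨h1, h2⟩
    have e1 : p.1 = 1 := eq_one_of_lenS_zero (by omega)
    have e2 : p.2 = 1 := eq_one_of_lenS_zero (by omega)
    exact Prod.ext e1 e2
  · intro h
    rw [h]
    simp [lenS_one]

lemma FacF_sN (i : ℕ) : FacF (sN i) = {((1 : SPlus), sN i), (sN i, (1 : SPlus))} := by
  ext p
  rw [mem_FacF, lenS_sN, Finset.mem_insert, Finset.mem_singleton]
  constructor
  · rintro ⟨h1, h2⟩
    rcases (by omega : lenS p.1 = 0 ∨ lenS p.2 = 0) with h | h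
    · left
      have e1 : p.1 = 1 := eq_one_of_lenS_zero h
      have e2 : p.2 = sN i := by rw [e1, one_mul] at h1; exact h1.symm
      exact Prod.ext e1 e2
    · right
      have e2 : p.2 = 1 := eq_one_of_lenS_zero h
      have e1 : p.1 = sN i := by rw [e2, mul_one] at h1; exact h1.symm
      exact Prod.ext e1 e2
  · rintro (h | h) <;> rw [h] <;>
      simp [lenS_one, lenS_sN]

/-- Reindexing sums over factorizations: right descent case. -/
lemma sum_fac_right {M : Type*} [AddCommMonoid M] (G : SPlus × SPlus → M)
    (w : SPlus) (i : ℕ) (hw : lenS (w * sN i) < lenS w) :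
    ∑ p ∈ (FacF w).filter (fun p => lenS (p.2 * sN i) < lenS p.2),
        G (p.1, p.2 * sN i)
      = ∑ q ∈ FacF (w * sN i), G q := by
  classical
  have hwlen := rdesc_len hw
  refine Finset.sum_bij' (fun p _ => (p.1, p.2 * sN i)) (fun q _ => (q.1, q.2 * sN i))
    ?_ ?_ ?_ ?_ ?_
  · intro p hp
    rw [Finset.mem_filter] at hp
    obtain ⟨hpf, hpd⟩ := hp
    rw [mem_FacF] at hpf ⊢
    have hplen := rdesc_len hpd
    constructor
    · show w * sN i = p.1 * (p.2 * sN i)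
      rw [hpf.1, mul_assoc]
    · show lenS (w * sN i) = lenS p.1 + lenS (p.2 * sN i)
      have := hpf.2
      omega
  · intro q hq
    rw [mem_FacF] at hq
    have hfac : w = q.1 * (q.2 * sN i) := by
      have : w = w * sN i * sN i := by rw [mul_assoc, sN_mul_self, mul_one]
      rw [this, hq.1, mul_assoc]
    have hle : lenS w ≤ lenS q.1 + lenS (q.2 * sN i) := by
      rw [hfac]; exact lenS_mul_le _ _
    by_cases hd : lenS (q.2 * sN i) < lenS q.2
    · exfalso
      have := rdesc_len hd
      have := hq.2
      omega
    · have hasc := rasc_len hd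
      rw [Finset.mem_filter]
      constructor
      · rw [mem_FacF]
        refine ⟨hfac, ?_⟩
        show lenS w = lenS q.1 + lenS (q.2 * sN i)
        have := hq.2
        omega
      · show lenS (q.2 * sN i * sN i) < lenS (q.2 * sN i)
        rw [mul_assoc, sN_mul_self, mul_one]
        omega
  · intro p _
    dsimp only
    rw [mul_assoc, sN_mul_self, mul_one]
  · intro q _
    dsimp only
    rw [mul_assoc, sN_mul_self, mul_one]
  · intro p _
    rfl

lemma fac_filter_right_empty (w : SPlus) (i : ℕ) (hw : ¬ lenS (w * sN i) < lenS w) :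
    (FacF w).filter (fun p => lenS (p.2 * sN i) < lenS p.2) = ∅ := by
  classical
  rw [Finset.eq_empty_iff_forall_notMem]
  intro p hp
  rw [Finset.mem_filter, mem_FacF] at hp
  obtain ⟨⟨h1, h2⟩, hd⟩ := hp
  have hplen := rdesc_len hd
  have hfac : w * sN i = p.1 * (p.2 * sN i) := by rw [h1, mul_assoc]
  have hle : lenS (w * sN i) ≤ lenS p.1 + lenS (p.2 * sN i) := by
    rw [hfac]; exact lenS_mul_le _ _
  omega

/-- Reindexing sums over factorizations: left descent case. -/
lemma sum_fac_left {M : Type*} [AddCommMonoid M] (G : SPlus × SPlus → M)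
    (w : SPlus) (i : ℕ) (hw : lenS (sN i * w) < lenS w) :
    ∑ p ∈ (FacF w).filter (fun p => lenS (sN i * p.1) < lenS p.1),
        G (sN i * p.1, p.2)
      = ∑ q ∈ FacF (sN i * w), G q := by
  classical
  have hwlen := ldesc_len hw
  refine Finset.sum_bij' (fun p _ => (sN i * p.1, p.2)) (fun q _ => (sN i * q.1, q.2))
    ?_ ?_ ?_ ?_ ?_
  · intro p hp
    rw [Finset.mem_filter] at hp
    obtain ⟨hpf, hpd⟩ := hp
    rw [mem_FacF] at hpf ⊢
    have hplen := ldesc_len hpd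
    constructor
    · show sN i * w = sN i * p.1 * p.2
      rw [hpf.1, mul_assoc]
    · show lenS (sN i * w) = lenS (sN i * p.1) + lenS p.2
      have := hpf.2
      omega
  · intro q hq
    rw [mem_FacF] at hq
    have hfac : w = sN i * q.1 * q.2 := by
      have : w = sN i * (sN i * w) := by rw [← mul_assoc, sN_mul_self, one_mul]
      rw [this, hq.1, mul_assoc]
    have hle : lenS w ≤ lenS (sN i * q.1) + lenS q.2 := by
      rw [hfac]; exact lenS_mul_le _ _
    by_cases hd : lenS (sN i * q.1) < lenS q.1
    · exfalso
      have := ldesc_len hd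
      have := hq.2
      omega
    · have hasc := lasc_len hd
      rw [Finset.mem_filter]
      constructor
      · rw [mem_FacF]
        refine ⟨hfac, ?_⟩
        show lenS w = lenS (sN i * q.1) + lenS q.2
        have := hq.2
        omega
      · show lenS (sN i * (sN i * q.1)) < lenS (sN i * q.1)
        rw [← mul_assoc, sN_mul_self, one_mul]
        omega
  · intro p _
    dsimp only
    rw [← mul_assoc, sN_mul_self, one_mul]
  · intro q _
    dsimp only
    rw [← mul_assoc, sN_mul_self, one_mul]
  · intro p _
    rfl

lemma fac_filter_left_empty (w : SPlus) (i : ℕ) (hw : ¬ lenS (sN i * w) < lenS w) :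
    (FacF w).filter (fun p => lenS (sN i * p.1) < lenS p.1) = ∅ := by
  classical
  rw [Finset.eq_empty_iff_forall_notMem]
  intro p hp
  rw [Finset.mem_filter, mem_FacF] at hp
  obtain ⟨⟨h1, h2⟩, hd⟩ := hp
  have hplen := ldesc_len hd
  have hfac : sN i * w = sN i * p.1 * p.2 := by rw [h1, mul_assoc]
  have hle : lenS (sN i * w) ≤ lenS (sN i * p.1) + lenS p.2 := by
    rw [hfac]; exact lenS_mul_le _ _
  omega

end SchubAux
namespace SchubAux

open MvPolynomial

lemma vars_rename_equiv {τ : Type*} [DecidableEq τ] (e : Equiv.Perm τ)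
    (q : MvPolynomial τ ℚ) : (rename (⇑e) q).vars = q.vars.image e := by
  refine Finset.Subset.antisymm (vars_rename _ _) ?_
  have h0 : q = rename (⇑e.symm) (rename (⇑e) q) := by
    rw [rename_rename]
    have : (⇑e.symm ∘ ⇑e) = id := by funext k; simp
    rw [this, rename_id, AlgHom.id_apply]
  calc q.vars.image ⇑e
      = ((rename (⇑e.symm) (rename (⇑e) q)).vars).image ⇑e := by rw [← h0]
    _ ⊆ (((rename (⇑e) q).vars).image ⇑e.symm).image ⇑e :=
        Finset.image_subset_image (vars_rename _ _)
    _ = ((rename (⇑e) q).vars).image (⇑e ∘ ⇑e.symm) := Finset.image_image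
    _ = (rename (⇑e) q).vars := by
        have : (⇑e ∘ ⇑e.symm) = id := by funext k; simp
        rw [this, Finset.image_id]

lemma vars_empty_of_swap_fixed (q : MvPolynomial ℕ ℚ)
    (h : ∀ i, rename (fun j => Equiv.swap i (i + 1) j) q = q) : q.vars = ∅ := by
  by_contra hne
  obtain ⟨m, hm, hmax⟩ := Finset.exists_max_image q.vars id
    (Finset.nonempty_iff_ne_empty.2 hne)
  have he : rename (⇑(Equiv.swap m (m + 1))) q = q := h m
  have hv := vars_rename_equiv (Equiv.swap m (m + 1)) q
  rw [he] at hv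
  have : (m + 1) ∈ q.vars := by
    rw [hv]
    refine Finset.mem_image.2 ⟨m, hm, ?_⟩
    exact Equiv.swap_apply_left _ _
  have h2 := hmax _ this
  simp only [id_eq] at h2
  omega

lemma eq_zero_of_homog_vars_empty {q : MvPolynomial ℕ ℚ} {n : ℕ} (hn : n ≠ 0)
    (hq : q.IsHomogeneous n) (hv : q.vars = ∅) : q = 0 := by
  ext d
  rw [coeff_zero]
  by_contra hc
  by_cases hd : d = 0
  · subst hd
    have : (0 : ℕ →₀ ℕ).degree = 0 := by simp
    exact hc (hq.coeff_eq_zero (by rw [this]; omega))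
  · obtain ⟨i, hi⟩ := Finsupp.support_nonempty_iff.2 hd
    have : i ∈ q.vars := (mem_vars i).2 ⟨d, mem_support_iff.2 hc, hi⟩
    rw [hv] at this
    exact absurd this (Finset.notMem_empty _)

lemma swap_comp_inl (i : ℕ) :
    ((fun v => Equiv.swap (Sum.inl i : ℕ ⊕ ℕ) (Sum.inl (i + 1)) v) ∘ Sum.inl)
      = (Sum.inl ∘ fun j => Equiv.swap i (i + 1) j) := by
  funext k
  show Equiv.swap (Sum.inl i : ℕ ⊕ ℕ) (Sum.inl (i + 1)) (Sum.inl k)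
    = Sum.inl (Equiv.swap i (i + 1) k)
  rcases eq_or_ne k i with rfl | hki
  · rw [Equiv.swap_apply_left, Equiv.swap_apply_left]
  rcases eq_or_ne k (i + 1) with rfl | hki1
  · rw [Equiv.swap_apply_right, Equiv.swap_apply_right]
  · rw [Equiv.swap_apply_of_ne_of_ne (fun hc => hki (Sum.inl.inj hc))
      (fun hc => hki1 (Sum.inl.inj hc)),
      Equiv.swap_apply_of_ne_of_ne hki hki1]

lemma swap_comp_inr (i : ℕ) :
    ((fun v => Equiv.swap (Sum.inl i : ℕ ⊕ ℕ) (Sum.inl (i + 1)) v) ∘ Sum.inr)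
      = (Sum.inr : ℕ → ℕ ⊕ ℕ) := by
  funext k
  exact Equiv.swap_apply_of_ne_of_ne (by simp) (by simp)

lemma sx_rename_inr (i : ℕ) (q : MvPolynomial ℕ ℚ) :
    sx i (rename Sum.inr q) = rename Sum.inr q := by
  show rename _ (rename Sum.inr q) = _
  rw [rename_rename, swap_comp_inr]

lemma sx_rename_inl (i : ℕ) (q : MvPolynomial ℕ ℚ) :
    sx i (rename Sum.inl q)
      = rename Sum.inl (rename (fun j => Equiv.swap i (i + 1) j) q) := by
  show rename _ (rename Sum.inl q) = _
  rw [rename_rename, rename_rename, swap_comp_inl]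

lemma setXtoA_rename_inl (q : MvPolynomial ℕ ℚ) :
    setXtoA (rename Sum.inl q) = rename Sum.inr q := by
  show rename _ (rename Sum.inl q) = _
  rw [rename_rename, Sum.elim_comp_inl]

lemma setXtoA_rename_inr (q : MvPolynomial ℕ ℚ) :
    setXtoA (rename Sum.inr q) = rename Sum.inr q := by
  show rename _ (rename Sum.inr q) = _
  rw [rename_rename, Sum.elim_comp_inr]

lemma vars_subset_inr (f : DR) (h : ∀ i, sx i f = f) :
    ↑f.vars ⊆ Set.range (Sum.inr : ℕ → ℕ ⊕ ℕ) := by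
  classical
  intro v hv
  rcases v with m | m
  · exfalso
    have hv' : (Sum.inl m : ℕ ⊕ ℕ) ∈ f.vars := hv
    have hne : (f.vars.filter (fun v => v.isLeft)).Nonempty :=
      ⟨Sum.inl m, Finset.mem_filter.2 ⟨hv', rfl⟩⟩
    obtain ⟨b, hb, hmaxb⟩ :=
      Finset.exists_max_image (f.vars.filter (fun v => v.isLeft))
        (Sum.elim id fun _ => 0) hne
    obtain ⟨hbv, hbl⟩ := Finset.mem_filter.1 hb
    rcases b with m0 | m0
    swap
    · simp at hbl
    have hswap := h m0
    have hv2 : f.vars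
        = f.vars.image (⇑(Equiv.swap (Sum.inl m0 : ℕ ⊕ ℕ) (Sum.inl (m0 + 1)))) := by
      have h3 := vars_rename_equiv
        (Equiv.swap (Sum.inl m0 : ℕ ⊕ ℕ) (Sum.inl (m0 + 1))) f
      rw [show rename (⇑(Equiv.swap (Sum.inl m0 : ℕ ⊕ ℕ) (Sum.inl (m0 + 1)))) f
        = sx m0 f from rfl, hswap] at h3
      exact h3
    have hmem1 : (Sum.inl (m0 + 1) : ℕ ⊕ ℕ) ∈ f.vars := by
      rw [hv2]
      exact Finset.mem_image.2 ⟨_, hbv, Equiv.swap_apply_left _ _⟩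
    have hmem2 : (Sum.inl (m0 + 1) : ℕ ⊕ ℕ) ∈ f.vars.filter (fun v => v.isLeft) :=
      Finset.mem_filter.2 ⟨hmem1, rfl⟩
    have h4 := hmaxb _ hmem2
    simp only [Sum.elim_inl, id_eq] at h4
    omega
  · exact ⟨m, rfl⟩

lemma setXtoA_fixed (f : DR) (h : ↑f.vars ⊆ Set.range (Sum.inr : ℕ → ℕ ⊕ ℕ)) :
    setXtoA f = f := by
  have hf : f ∈ supported ℚ (Set.range (Sum.inr : ℕ → ℕ ⊕ ℕ)) :=
    (mem_supported).2 h
  rw [supported_eq_range_rename] at hf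
  obtain ⟨g, hg⟩ := hf
  have hcomp : (Sum.elim (Sum.inr : ℕ → ℕ ⊕ ℕ) Sum.inr
      ∘ ((↑) : Set.range (Sum.inr : ℕ → ℕ ⊕ ℕ) → ℕ ⊕ ℕ))
      = ((↑) : Set.range (Sum.inr : ℕ → ℕ ⊕ ℕ) → ℕ ⊕ ℕ) := by
    funext x
    obtain ⟨x, k, rfl⟩ := x
    rfl
  rw [← hg]
  show rename _ (rename _ g) = _
  rw [rename_rename, hcomp]
  rfl

end SchubAux
namespace SchubAux

open MvPolynomial

variable (S : SPlus → MvPolynomial ℕ ℚ)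

/-- The single-alphabet signed convolution `∑ (-1)^{ℓ(u)} 𝔖_{u⁻¹} 𝔖_v`. -/
noncomputable def hP (w : SPlus) : MvPolynomial ℕ ℚ :=
  ∑ p ∈ FacF w, (-1 : MvPolynomial ℕ ℚ) ^ lenS p.1 * S p.1⁻¹ * S p.2

/-- The candidate double Schubert polynomial. -/
noncomputable def EP (w : SPlus) : DR :=
  ∑ p ∈ FacF w, (-1 : DR) ^ lenS p.1 * rename Sum.inr (S p.1⁻¹) * rename Sum.inl (S p.2)

lemma hP_def (w : SPlus) :
    hP S w = ∑ p ∈ FacF w, (-1 : MvPolynomial ℕ ℚ) ^ lenS p.1 * S p.1⁻¹ * S p.2 := rfl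

lemma EP_def (w : SPlus) :
    EP S w = ∑ p ∈ FacF w,
      (-1 : DR) ^ lenS p.1 * rename Sum.inr (S p.1⁻¹) * rename Sum.inl (S p.2) := rfl

lemma EP_one (hS1 : S 1 = 1) : EP S 1 = 1 := by
  rw [EP_def, FacF_one, Finset.sum_singleton]
  show (-1 : DR) ^ lenS (1 : SPlus) * rename Sum.inr (S (1 : SPlus)⁻¹)
    * rename Sum.inl (S 1) = 1
  rw [lenS_one, inv_one, hS1, pow_zero, map_one, map_one]
  ring

variable {S}

lemma S_sub_swap (hS : SchubertFamily S) (v : SPlus) (i : ℕ) :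
    S v - rename (fun j => Equiv.swap i (i + 1) j) (S v)
      = if lenS (v * sN i) < lenS v
        then (X i - X (i + 1)) * S (v * sN i) else 0 := by
  have hax := hS.2.2 v i
  by_cases hd : lenS (v * sN i) < lenS v
  · rw [if_pos hd] at hax ⊢
    rw [hax]
  · rw [if_neg hd] at hax ⊢
    rw [hax, sub_self]

lemma S_inv_sub_swap (hS : SchubertFamily S) (u : SPlus) (i : ℕ) :
    S u⁻¹ - rename (fun j => Equiv.swap i (i + 1) j) (S u⁻¹)
      = if lenS (sN i * u) < lenS u
        then (X i - X (i + 1)) * S ((sN i * u)⁻¹) else 0 := by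
  have h0 := S_sub_swap hS u⁻¹ i
  have he : u⁻¹ * sN i = (sN i * u)⁻¹ := by rw [mul_inv_rev, sN_inv]
  rw [he] at h0
  rw [lenS_inv, lenS_inv] at h0
  exact h0

/-- The "left" machine: sum of divided differences of the first factors. -/
lemma sumA (hS : SchubertFamily S) (w : SPlus) (i : ℕ) :
    ∑ p ∈ FacF w, (-1 : MvPolynomial ℕ ℚ) ^ lenS p.1 *
        (S p.1⁻¹ - rename (fun j => Equiv.swap i (i + 1) j) (S p.1⁻¹)) * S p.2
      = if lenS (sN i * w) < lenS w
          then (X i - X (i + 1)) * (- hP S (sN i * w)) else 0 := by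
  classical
  have hterm : ∀ p ∈ FacF w, (-1 : MvPolynomial ℕ ℚ) ^ lenS p.1 *
        (S p.1⁻¹ - rename (fun j => Equiv.swap i (i + 1) j) (S p.1⁻¹)) * S p.2
      = if lenS (sN i * p.1) < lenS p.1
          then (X i - X (i + 1)) *
            ((-1 : MvPolynomial ℕ ℚ) ^ lenS p.1 * S ((sN i * p.1)⁻¹) * S p.2)
          else 0 := by
    intro p _
    rw [S_inv_sub_swap hS p.1 i]
    by_cases hd : lenS (sN i * p.1) < lenS p.1
    · rw [if_pos hd, if_pos hd]
      ring
    · rw [if_neg hd, if_neg hd, mul_zero, zero_mul]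
  rw [Finset.sum_congr rfl hterm, ← Finset.sum_filter]
  by_cases hw : lenS (sN i * w) < lenS w
  · rw [if_pos hw, ← Finset.mul_sum]
    congr 1
    have hstep : ∀ p ∈ (FacF w).filter (fun p => lenS (sN i * p.1) < lenS p.1),
        (-1 : MvPolynomial ℕ ℚ) ^ lenS p.1 * S ((sN i * p.1)⁻¹) * S p.2
          = (fun q : SPlus × SPlus =>
              -((-1 : MvPolynomial ℕ ℚ) ^ lenS q.1 * S q.1⁻¹ * S q.2)) (sN i * p.1, p.2) := by
      intro p hp
      obtain ⟨-, hd⟩ := Finset.mem_filter.1 hp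
      dsimp only
      rw [← ldesc_len hd, pow_succ]
      ring
    calc ∑ p ∈ (FacF w).filter (fun p => lenS (sN i * p.1) < lenS p.1),
          (-1 : MvPolynomial ℕ ℚ) ^ lenS p.1 * S ((sN i * p.1)⁻¹) * S p.2
        = ∑ p ∈ (FacF w).filter (fun p => lenS (sN i * p.1) < lenS p.1),
            (fun q : SPlus × SPlus =>
              -((-1 : MvPolynomial ℕ ℚ) ^ lenS q.1 * S q.1⁻¹ * S q.2)) (sN i * p.1, p.2) :=
          Finset.sum_congr rfl hstep
      _ = ∑ q ∈ FacF (sN i * w),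
            -((-1 : MvPolynomial ℕ ℚ) ^ lenS q.1 * S q.1⁻¹ * S q.2) :=
          sum_fac_left (fun q : SPlus × SPlus =>
            -((-1 : MvPolynomial ℕ ℚ) ^ lenS q.1 * S q.1⁻¹ * S q.2)) w i hw
      _ = - hP S (sN i * w) := by
          rw [Finset.sum_neg_distrib, hP_def]
  · rw [if_neg hw, fac_filter_left_empty w i hw, Finset.sum_empty]

/-- The "right" machine: sum of divided differences of the second factors. -/
lemma sumB (hS : SchubertFamily S) (F : SPlus → MvPolynomial ℕ ℚ) (w : SPlus) (i : ℕ) :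
    ∑ p ∈ FacF w, (-1 : MvPolynomial ℕ ℚ) ^ lenS p.1 * F p.1 *
        (S p.2 - rename (fun j => Equiv.swap i (i + 1) j) (S p.2))
      = if lenS (w * sN i) < lenS w
          then (X i - X (i + 1)) *
            ∑ q ∈ FacF (w * sN i), (-1 : MvPolynomial ℕ ℚ) ^ lenS q.1 * F q.1 * S q.2
          else 0 := by
  classical
  have hterm : ∀ p ∈ FacF w, (-1 : MvPolynomial ℕ ℚ) ^ lenS p.1 * F p.1 *
        (S p.2 - rename (fun j => Equiv.swap i (i + 1) j) (S p.2))
      = if lenS (p.2 * sN i) < lenS p.2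
          then (X i - X (i + 1)) *
            ((-1 : MvPolynomial ℕ ℚ) ^ lenS p.1 * F p.1 * S (p.2 * sN i))
          else 0 := by
    intro p _
    rw [S_sub_swap hS p.2 i]
    by_cases hd : lenS (p.2 * sN i) < lenS p.2
    · rw [if_pos hd, if_pos hd]
      ring
    · rw [if_neg hd, if_neg hd, mul_zero]
  rw [Finset.sum_congr rfl hterm, ← Finset.sum_filter]
  by_cases hw : lenS (w * sN i) < lenS w
  · rw [if_pos hw, ← Finset.mul_sum]
    congr 1
    calc ∑ p ∈ (FacF w).filter (fun p => lenS (p.2 * sN i) < lenS p.2),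
          (-1 : MvPolynomial ℕ ℚ) ^ lenS p.1 * F p.1 * S (p.2 * sN i)
        = ∑ p ∈ (FacF w).filter (fun p => lenS (p.2 * sN i) < lenS p.2),
            (fun q : SPlus × SPlus =>
              (-1 : MvPolynomial ℕ ℚ) ^ lenS q.1 * F q.1 * S q.2) (p.1, p.2 * sN i) :=
          Finset.sum_congr rfl fun p _ => rfl
      _ = ∑ q ∈ FacF (w * sN i),
            (-1 : MvPolynomial ℕ ℚ) ^ lenS q.1 * F q.1 * S q.2 :=
          sum_fac_right (fun q : SPlus × SPlus =>
            (-1 : MvPolynomial ℕ ℚ) ^ lenS q.1 * F q.1 * S q.2) w i hw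
  · rw [if_neg hw, fac_filter_right_empty w i hw, Finset.sum_empty]

lemma hP_rec (hS : SchubertFamily S) (w : SPlus) (i : ℕ) :
    hP S w - rename (fun j => Equiv.swap i (i + 1) j) (hP S w)
      = (if lenS (sN i * w) < lenS w
          then (X i - X (i + 1)) * (- hP S (sN i * w)) else 0)
        + (if lenS (w * sN i) < lenS w
            then (X i - X (i + 1)) *
              (hP S (w * sN i) -
                (if lenS (sN i * (w * sN i)) < lenS (w * sN i)
                  then (X i - X (i + 1)) * (- hP S (sN i * (w * sN i))) else 0))
            else 0) := by
  classical
  have split : hP S w - rename (fun j => Equiv.swap i (i + 1) j) (hP S w)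
      = (∑ p ∈ FacF w, (-1 : MvPolynomial ℕ ℚ) ^ lenS p.1 *
          (S p.1⁻¹ - rename (fun j => Equiv.swap i (i + 1) j) (S p.1⁻¹)) * S p.2)
        + (∑ p ∈ FacF w, (-1 : MvPolynomial ℕ ℚ) ^ lenS p.1 *
            (rename (fun j => Equiv.swap i (i + 1) j) (S p.1⁻¹)) *
            (S p.2 - rename (fun j => Equiv.swap i (i + 1) j) (S p.2))) := by
    rw [hP_def, map_sum, ← Finset.sum_sub_distrib, ← Finset.sum_add_distrib]
    refine Finset.sum_congr rfl fun p _ => ?_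
    rw [map_mul, map_mul, map_pow, map_neg, map_one]
    ring
  have hB : ∑ p ∈ FacF w, (-1 : MvPolynomial ℕ ℚ) ^ lenS p.1 *
        (rename (fun j => Equiv.swap i (i + 1) j) (S p.1⁻¹)) *
        (S p.2 - rename (fun j => Equiv.swap i (i + 1) j) (S p.2))
      = if lenS (w * sN i) < lenS w
          then (X i - X (i + 1)) *
            ∑ q ∈ FacF (w * sN i), (-1 : MvPolynomial ℕ ℚ) ^ lenS q.1 *
              (rename (fun j => Equiv.swap i (i + 1) j) (S q.1⁻¹)) * S q.2
          else 0 :=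
    sumB hS (fun u => rename (fun j => Equiv.swap i (i + 1) j) (S u⁻¹)) w i
  rw [split, sumA hS w i, hB]
  congr 1
  by_cases hw : lenS (w * sN i) < lenS w
  · rw [if_pos hw, if_pos hw]
    congr 1
    have expand : ∀ q ∈ FacF (w * sN i),
        (-1 : MvPolynomial ℕ ℚ) ^ lenS q.1 *
          (rename (fun j => Equiv.swap i (i + 1) j) (S q.1⁻¹)) * S q.2
        = (-1 : MvPolynomial ℕ ℚ) ^ lenS q.1 * S q.1⁻¹ * S q.2
          - (-1 : MvPolynomial ℕ ℚ) ^ lenS q.1 *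
            (S q.1⁻¹ - rename (fun j => Equiv.swap i (i + 1) j) (S q.1⁻¹)) * S q.2 :=
      fun q _ => by ring
    rw [Finset.sum_congr rfl expand, Finset.sum_sub_distrib, sumA hS (w * sN i) i]
    rfl
  · rw [if_neg hw, if_neg hw]

lemma EP_rec (hS : SchubertFamily S) (w : SPlus) (i : ℕ) :
    if lenS (w * sN i) < lenS w then
      (X (Sum.inl i) - X (Sum.inl (i + 1))) * EP S (w * sN i)
        = EP S w - sx i (EP S w)
    else sx i (EP S w) = EP S w := by
  classical
  have hterm : ∀ p ∈ FacF w,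
      ((-1 : DR) ^ lenS p.1 * rename Sum.inr (S p.1⁻¹) * rename Sum.inl (S p.2))
        - sx i ((-1 : DR) ^ lenS p.1 * rename Sum.inr (S p.1⁻¹) * rename Sum.inl (S p.2))
      = if lenS (p.2 * sN i) < lenS p.2
          then (X (Sum.inl i) - X (Sum.inl (i + 1))) *
            ((-1 : DR) ^ lenS p.1 * rename Sum.inr (S p.1⁻¹)
              * rename Sum.inl (S (p.2 * sN i)))
          else 0 := by
    intro p _
    rw [map_mul, map_mul, map_pow, map_neg, map_one, sx_rename_inr, sx_rename_inl]
    have e1 : (-1 : DR) ^ lenS p.1 * rename Sum.inr (S p.1⁻¹) * rename Sum.inl (S p.2)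
        - (-1 : DR) ^ lenS p.1 * rename Sum.inr (S p.1⁻¹) *
          rename Sum.inl (rename (fun j => Equiv.swap i (i + 1) j) (S p.2))
        = (-1 : DR) ^ lenS p.1 * rename Sum.inr (S p.1⁻¹) *
          rename Sum.inl (S p.2 - rename (fun j => Equiv.swap i (i + 1) j) (S p.2)) := by
      rw [map_sub]
      ring
    rw [e1, S_sub_swap hS p.2 i]
    by_cases hd : lenS (p.2 * sN i) < lenS p.2
    · rw [if_pos hd, if_pos hd, map_mul, map_sub, rename_X, rename_X]
      ring
    · rw [if_neg hd, if_neg hd, map_zero, mul_zero]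
  have hmain : EP S w - sx i (EP S w)
      = ∑ p ∈ (FacF w).filter (fun p => lenS (p.2 * sN i) < lenS p.2),
          (X (Sum.inl i) - X (Sum.inl (i + 1))) *
            ((-1 : DR) ^ lenS p.1 * rename Sum.inr (S p.1⁻¹)
              * rename Sum.inl (S (p.2 * sN i))) := by
    rw [EP_def, map_sum, ← Finset.sum_sub_distrib, Finset.sum_congr rfl hterm,
      ← Finset.sum_filter]
  by_cases hw : lenS (w * sN i) < lenS w
  · rw [if_pos hw, hmain, ← Finset.mul_sum]
    congr 1
    calc EP S (w * sN i)
        = ∑ q ∈ FacF (w * sN i),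
            (-1 : DR) ^ lenS q.1 * rename Sum.inr (S q.1⁻¹) * rename Sum.inl (S q.2) :=
          EP_def S _
      _ = ∑ p ∈ (FacF w).filter (fun p => lenS (p.2 * sN i) < lenS p.2),
          (fun q : SPlus × SPlus => (-1 : DR) ^ lenS q.1 * rename Sum.inr (S q.1⁻¹)
            * rename Sum.inl (S q.2)) (p.1, p.2 * sN i) :=
          (sum_fac_right (fun q : SPlus × SPlus => (-1 : DR) ^ lenS q.1
            * rename Sum.inr (S q.1⁻¹) * rename Sum.inl (S q.2)) w i hw).symm
      _ = ∑ p ∈ (FacF w).filter (fun p => lenS (p.2 * sN i) < lenS p.2),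
          (-1 : DR) ^ lenS p.1 * rename Sum.inr (S p.1⁻¹)
            * rename Sum.inl (S (p.2 * sN i)) :=
          Finset.sum_congr rfl fun p _ => rfl
  · rw [if_neg hw]
    have h0 : EP S w - sx i (EP S w) = 0 := by
      rw [hmain, fac_filter_right_empty w i hw, Finset.sum_empty]
    exact (sub_eq_zero.mp h0).symm

lemma setXtoA_EP (w : SPlus) : setXtoA (EP S w) = rename Sum.inr (hP S w) := by
  rw [EP_def, hP_def, map_sum, map_sum]
  refine Finset.sum_congr rfl fun p _ => ?_
  rw [map_mul, map_mul, map_pow, map_neg, map_one, setXtoA_rename_inl,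
    setXtoA_rename_inr, map_mul, map_mul, map_pow, map_neg, map_one]

lemma hP_homog (hS : SchubertFamily S) (w : SPlus) :
    (hP S w).IsHomogeneous (lenS w) := by
  rw [hP_def]
  apply MvPolynomial.IsHomogeneous.sum
  intro p hp
  have h1 : ((-1 : MvPolynomial ℕ ℚ) ^ lenS p.1).IsHomogeneous 0 := by
    have hC : C ((-1 : ℚ) ^ lenS p.1) = (-1 : MvPolynomial ℕ ℚ) ^ lenS p.1 := by
      rw [map_pow, map_neg, C_1]
    rw [← hC]
    exact isHomogeneous_C _ _
  have h4 := (h1.mul (hS.2.1 p.1⁻¹)).mul (hS.2.1 p.2)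
  have he : 0 + lenS p.1⁻¹ + lenS p.2 = lenS w := by
    rw [lenS_inv]
    have := (mem_FacF.1 hp).2
    omega
  rwa [he] at h4

lemma hP_sN (hS1 : S 1 = 1) (i : ℕ) : hP S (sN i) = 0 := by
  classical
  rw [hP_def, FacF_sN]
  rw [Finset.sum_insert, Finset.sum_singleton]
  · show (-1 : MvPolynomial ℕ ℚ) ^ lenS (1 : SPlus) * S (1 : SPlus)⁻¹ * S (sN i)
      + (-1 : MvPolynomial ℕ ℚ) ^ lenS (sN i) * S (sN i)⁻¹ * S 1 = 0
    rw [lenS_one, lenS_sN, inv_one, sN_inv, hS1, pow_zero, pow_one]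
    ring
  · rw [Finset.mem_singleton]
    intro hc
    have := congrArg Prod.fst hc
    exact sN_ne_one i this.symm

lemma hP_zero (hS : SchubertFamily S) : ∀ w : SPlus, w ≠ 1 → hP S w = 0 := by
  suffices H : ∀ n (w : SPlus), lenS w = n → w ≠ 1 → hP S w = 0 by
    intro w hw
    exact H _ w rfl hw
  intro n
  induction n using Nat.strong_induction_on with
  | _ n ih =>
    intro w hlen hw1
    have hn0 : n ≠ 0 := by
      intro hc
      rw [hc] at hlen
      exact hw1 (eq_one_of_lenS_zero hlen)
    by_cases hn1 : n = 1
    · obtain ⟨i, rfl⟩ := eq_sN_of_lenS_one (by rw [hlen, hn1])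
      exact hP_sN hS.1 i
    · have hsym : ∀ i, rename (fun j => Equiv.swap i (i + 1) j) (hP S w) = hP S w := by
        intro i
        have hrec := hP_rec hS w i
        have hz1 : (if lenS (sN i * w) < lenS w
            then (X i - X (i + 1)) * (- hP S (sN i * w)) else 0) = 0 := by
          by_cases hd : lenS (sN i * w) < lenS w
          · rw [if_pos hd]
            have hne : sN i * w ≠ 1 := by
              intro hc
              have hws : w = (sN i)⁻¹ := eq_inv_of_mul_eq_one_right hc
              rw [sN_inv] at hws
              rw [hws, lenS_sN] at hlen
              omega
            have hlt := ldesc_len hd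
            rw [ih (lenS (sN i * w)) (by omega) _ rfl hne, neg_zero, mul_zero]
          · exact if_neg hd
        have hz2 : (if lenS (w * sN i) < lenS w
            then (X i - X (i + 1)) *
              (hP S (w * sN i) -
                (if lenS (sN i * (w * sN i)) < lenS (w * sN i)
                  then (X i - X (i + 1)) * (- hP S (sN i * (w * sN i))) else 0))
            else 0) = 0 := by
          by_cases hd : lenS (w * sN i) < lenS w
          · rw [if_pos hd]
            have hlt := rdesc_len hd
            have hne : w * sN i ≠ 1 := by
              intro hc
              have hws : w = (sN i)⁻¹ := mul_eq_one_iff_eq_inv.mp hc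
              rw [sN_inv] at hws
              rw [hws, lenS_sN] at hlen
              omega
            have hmid := ih (lenS (w * sN i)) (by omega) _ rfl hne
            have hz3 : (if lenS (sN i * (w * sN i)) < lenS (w * sN i)
                then (X i - X (i + 1)) * (- hP S (sN i * (w * sN i))) else 0) = 0 := by
              by_cases hd2 : lenS (sN i * (w * sN i)) < lenS (w * sN i)
              · rw [if_pos hd2]
                have hne2 : sN i * (w * sN i) ≠ 1 := by
                  intro hc
                  have hws : w * sN i = (sN i)⁻¹ := eq_inv_of_mul_eq_one_right hc
                  rw [sN_inv] at hws
                  have : w = 1 := by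
                    have := congrArg (fun z => z * sN i) hws
                    rwa [mul_assoc, sN_mul_self, mul_one] at this
                  exact hw1 this
                have hlt2 := ldesc_len hd2
                rw [ih (lenS (sN i * (w * sN i))) (by omega) _ rfl hne2, neg_zero,
                  mul_zero]
              · exact if_neg hd2
            rw [hmid, hz3, sub_zero, mul_zero]
          · exact if_neg hd
        rw [hz1, hz2, add_zero] at hrec
        exact (sub_eq_zero.mp hrec).symm
      have hv := vars_empty_of_swap_fixed (hP S w) hsym
      exact eq_zero_of_homog_vars_empty (n := lenS w) (by omega) (hP_homog hS w) hv

end SchubAux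
/-- `𝔖_w(x; a) = ∑_{w ≐ uv} (-1)^{ℓ(u)} 𝔖_{u⁻¹}(a) 𝔖_v(x)`, the sum being over
length-additive factorizations `w = u v`. -/
theorem doubleSchubert_eq_signed_sum
    (S : SPlus → MvPolynomial ℕ ℚ) (hS : SchubertFamily S)
    (D : SPlus → DR) (hD : DoubleSchubertFamily D) (w : SPlus) :
    D w = ∑ᶠ p ∈ {p : SPlus × SPlus | w = p.1 * p.2 ∧ lenS w = lenS p.1 + lenS p.2},
        (-1 : DR) ^ lenS p.1 * rename Sum.inr (S p.1⁻¹) * rename Sum.inl (S p.2) := by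
  classical
  have hRHS : ∀ u : SPlus,
      ∑ᶠ p ∈ {p : SPlus × SPlus | u = p.1 * p.2 ∧ lenS u = lenS p.1 + lenS p.2},
        (-1 : DR) ^ lenS p.1 * rename Sum.inr (S p.1⁻¹) * rename Sum.inl (S p.2)
      = SchubAux.EP S u := by
    intro u
    have hset : {p : SPlus × SPlus | u = p.1 * p.2 ∧ lenS u = lenS p.1 + lenS p.2}
        = ↑(SchubAux.FacF u) := ((SchubAux.facSet_finite u).coe_toFinset).symm
    rw [hset, finsum_mem_coe_finset, SchubAux.EP_def]
  rw [hRHS w]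
  -- now prove `D w = EP S w` by strong induction on the length
  suffices H : ∀ n (w : SPlus), lenS w = n → D w = SchubAux.EP S w from H _ w rfl
  intro n
  induction n using Nat.strong_induction_on with
  | _ n ih =>
    intro w hlen
    rcases eq_or_ne w 1 with rfl | hw1
    · rw [hD.1, SchubAux.EP_one S hS.1]
    · have hsx : ∀ i, sx i (D w - SchubAux.EP S w) = D w - SchubAux.EP S w := by
        intro i
        have hDx := hD.2.2 w i
        have hEx := SchubAux.EP_rec hS w i
        by_cases hd : lenS (w * sN i) < lenS w
        · rw [if_pos hd] at hDx hEx
          have hIH : D (w * sN i) = SchubAux.EP S (w * sN i) := by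
            have := SchubAux.rdesc_len hd
            exact ih (lenS (w * sN i)) (by omega) _ rfl
          have e1 : sx i (D w)
              = D w - (X (Sum.inl i) - X (Sum.inl (i + 1))) * D (w * sN i) := by
            linear_combination hDx
          have e2 : sx i (SchubAux.EP S w)
              = SchubAux.EP S w
                - (X (Sum.inl i) - X (Sum.inl (i + 1))) * SchubAux.EP S (w * sN i) := by
            linear_combination hEx
          rw [map_sub, e1, e2, hIH]
          ring
        · rw [if_neg hd] at hDx hEx
          rw [map_sub, hDx, hEx]
      have hvars := SchubAux.vars_subset_inr _ hsx
      have hfix := SchubAux.setXtoA_fixed _ hvars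
      rw [map_sub, hD.2.1 w hw1, SchubAux.setXtoA_EP, SchubAux.hP_zero hS w hw1,
        map_zero] at hfix
      have h0 : D w - SchubAux.EP S w = 0 := by
        rw [← hfix]
        ring
      exact sub_eq_zero.mp h0
end

section
/- The back symmetric formal power series ring equals the tensor product $\Lambda \otimes \mathbb{Q}[x]$: if $f$ is a formal power series of bounded total degree in variables $x_i$ ($i \in \mathbb{Z}$), with variables of support bounded above, and there exists $b \in \mathbb{Z}$ such that $s_i(f) = f$ for all $i < b$, then $f$ lies in the subalgebra generated by the symmetric functions in $(x_0, x_{-1}, x_{-2}, \ldots)$ together with the individual variables $x_i$, $i \in \mathbb{Z}$; and conversely every such element is back symmetric. -/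
/-- `f` has bounded total degree. -/
def BddDeg (f : MvPowerSeries ℤ ℚ) : Prop :=
  ∃ M : ℕ, ∀ m : ℤ →₀ ℕ, MvPowerSeries.coeff m f ≠ 0 → (m.sum fun _ k => k) ≤ M

/-- The variables appearing in `f` are bounded above. -/
def SuppBddAbove (f : MvPowerSeries ℤ ℚ) : Prop :=
  ∃ N : ℤ, ∀ m : ℤ →₀ ℕ, MvPowerSeries.coeff m f ≠ 0 → ∀ i : ℤ, N < i → m i = 0

/-- The action of a permutation of `ℤ` on `MvPowerSeries ℤ ℚ` by permuting
variables. -/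
noncomputable def permSeries (w : Equiv.Perm ℤ) (f : MvPowerSeries ℤ ℚ) :
    MvPowerSeries ℤ ℚ :=
  fun m => MvPowerSeries.coeff (Finsupp.equivMapDomain w m) f

/-- `f` is back symmetric: `s_i f = f` for all sufficiently negative `i`. -/
def BackSym (f : MvPowerSeries ℤ ℚ) : Prop :=
  ∃ b : ℤ, ∀ i : ℤ, i < b → permSeries (Equiv.swap i (i + 1)) f = f

/-- The set of symmetric functions in the nonpositive variables `x_0, x_{-1}, …`:
power series of bounded degree, involving only nonpositive variables, invariant
under every finitely supported permutation of `ℤ` fixing the positive integers. -/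
def SymmNonpos : Set (MvPowerSeries ℤ ℚ) :=
  {g | BddDeg g ∧
    (∀ m : ℤ →₀ ℕ, MvPowerSeries.coeff m g ≠ 0 → ∀ i : ℤ, 0 < i → m i = 0) ∧
    (∀ w : Equiv.Perm ℤ, ({i : ℤ | w i ≠ i}).Finite → (∀ i : ℤ, 0 < i → w i = i) →
      permSeries w g = g)}

open MvPowerSeries Finsupp

lemma coeff_permSeries (w : Equiv.Perm ℤ) (f : MvPowerSeries ℤ ℚ) (m : ℤ →₀ ℕ) :
    MvPowerSeries.coeff m (permSeries w f) =
      MvPowerSeries.coeff (Finsupp.equivMapDomain w m) f := rfl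

lemma equivMapDomain_add (w : Equiv.Perm ℤ) (a b : ℤ →₀ ℕ) :
    equivMapDomain w (a + b) = equivMapDomain w a + equivMapDomain w b := by
  ext i; simp [equivMapDomain_apply]

lemma equivMapDomain_symm_comp (w : Equiv.Perm ℤ) (m : ℤ →₀ ℕ) :
    equivMapDomain w.symm (equivMapDomain w m) = m := by
  ext i; simp [equivMapDomain_apply]

lemma equivMapDomain_comp_symm (w : Equiv.Perm ℤ) (m : ℤ →₀ ℕ) :
    equivMapDomain w (equivMapDomain w.symm m) = m := by
  ext i; simp [equivMapDomain_apply]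

lemma permSeries_add (w : Equiv.Perm ℤ) (f g : MvPowerSeries ℤ ℚ) :
    permSeries w (f + g) = permSeries w f + permSeries w g := by
  ext m; simp [coeff_permSeries, map_add]

lemma permSeries_mul (w : Equiv.Perm ℤ) (f g : MvPowerSeries ℤ ℚ) :
    permSeries w (f * g) = permSeries w f * permSeries w g := by
  classical
  ext m
  rw [coeff_permSeries, MvPowerSeries.coeff_mul, MvPowerSeries.coeff_mul]
  refine Finset.sum_nbij' (i := fun p => (equivMapDomain w.symm p.1, equivMapDomain w.symm p.2))
    (j := fun p => (equivMapDomain w p.1, equivMapDomain w p.2)) ?_ ?_ ?_ ?_ ?_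
  · intro p hp
    rw [Finset.HasAntidiagonal.mem_antidiagonal] at hp ⊢
    have := congrArg (equivMapDomain w.symm) hp
    rwa [equivMapDomain_add, equivMapDomain_symm_comp] at this
  · intro p hp
    rw [Finset.HasAntidiagonal.mem_antidiagonal] at hp ⊢
    rw [← equivMapDomain_add, hp]
  · intro p _
    ext : 1 <;> exact equivMapDomain_comp_symm w _
  · intro p _
    ext : 1 <;> exact equivMapDomain_symm_comp w _
  · intro p _
    rw [coeff_permSeries, coeff_permSeries, equivMapDomain_comp_symm, equivMapDomain_comp_symm]

lemma permSeries_C (w : Equiv.Perm ℤ) (r : ℚ) :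
    permSeries w (MvPowerSeries.C r) = MvPowerSeries.C r := by
  classical
  ext m
  rw [coeff_permSeries, MvPowerSeries.coeff_C, MvPowerSeries.coeff_C]
  congr 1
  simp only [eq_iff_iff]
  constructor
  · intro h
    have := congrArg (equivMapDomain w.symm) h
    rwa [equivMapDomain_symm_comp, equivMapDomain_zero] at this
  · intro h; rw [h, equivMapDomain_zero]

lemma permSeries_comp (u v : Equiv.Perm ℤ) (f : MvPowerSeries ℤ ℚ) :
    permSeries v (permSeries u f) = permSeries (u * v) f := by
  ext m
  rw [coeff_permSeries, coeff_permSeries, coeff_permSeries, ← equivMapDomain_trans]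
  rfl

/-- multiset of nonzero values of a finsupp -/
def shape (m : ℤ →₀ ℕ) : Multiset ℕ := m.support.val.map m

lemma shape_equivMapDomain (w : Equiv.Perm ℤ) (m : ℤ →₀ ℕ) :
    shape (equivMapDomain w m) = shape m := by
  classical
  unfold shape
  have hsupp : (equivMapDomain w m).support = m.support.image w := by
    ext i
    simp [equivMapDomain_apply, Finset.mem_image]
    constructor
    · intro h; exact ⟨w.symm i, h, by simp⟩
    · rintro ⟨a, ha, rfl⟩; simpa using ha
  rw [hsupp]
  rw [Finset.image_val, Multiset.dedup_eq_self.2 (Multiset.Nodup.map w.injective m.support.nodup),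
    Multiset.map_map]
  apply Multiset.map_congr rfl
  intro x _
  simp [equivMapDomain_apply]

lemma shape_erase (m : ℤ →₀ ℕ) (j : ℤ) (h : m j ≠ 0) :
    shape m = m j ::ₘ shape (m.erase j) := by
  classical
  unfold shape
  have hj : j ∈ m.support := Finsupp.mem_support_iff.2 h
  rw [Finsupp.support_erase]
  have : m.support.val = j ::ₘ (m.support.erase j).val := by
    rw [← Finset.insert_erase hj]
    rw [Finset.insert_val, Multiset.ndinsert_of_notMem (fun hmem => Finset.notMem_erase j m.support hmem)]
    simp
  rw [this, Multiset.map_cons]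
  congr 1
  apply Multiset.map_congr rfl
  intro x hx
  have hxj : x ≠ j := by
    have := Finset.mem_erase.1 (by exact hx)
    exact this.1
  simp [Finsupp.erase_ne hxj]

lemma degree_eq_shape_sum (m : ℤ →₀ ℕ) : (m.sum fun _ k => k) = (shape m).sum := by
  rfl

lemma mem_shape_ne_zero {m : ℤ →₀ ℕ} {v : ℕ} (h : v ∈ shape m) : v ≠ 0 := by
  unfold shape at h
  obtain ⟨i, hi, rfl⟩ := Multiset.mem_map.1 h
  exact Finsupp.mem_support_iff.1 (by exact hi)

lemma apply_le_degree (m : ℤ →₀ ℕ) (i : ℤ) : m i ≤ m.sum fun _ k => k := by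
  classical
  by_cases h : i ∈ m.support
  · exact Finset.single_le_sum (f := fun a => m a) (fun _ _ => Nat.zero_le _) h
  · simp [Finsupp.notMem_support_iff.1 h]
section D1
variable {f : MvPowerSeries ℤ ℚ} {b : ℤ}

/-- invariance under a product of invariant permutations -/
lemma perm_inv_mul {u v : Equiv.Perm ℤ} (hu : permSeries u f = f) (hv : permSeries v f = f) :
    permSeries (u * v) f = f := by
  rw [← permSeries_comp, hu, hv]

lemma swap_invariance (hb : ∀ i : ℤ, i < b → permSeries (Equiv.swap i (i + 1)) f = f) :
    ∀ i j : ℤ, i < j → j ≤ b → permSeries (Equiv.swap i j) f = f := by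
  have key : ∀ n : ℕ, ∀ i j : ℤ, i < j → j ≤ b → (j - i).toNat ≤ n + 1 →
      permSeries (Equiv.swap i j) f = f := by
    intro n
    induction n with
    | zero =>
      intro i j hij hjb hn
      have : j = i + 1 := by omega
      subst this
      exact hb i (by omega)
    | succ n ih =>
      intro i j hij hjb hn
      by_cases hj : j = i + 1
      · subst hj; exact hb i (by omega)
      · have h1 : i + 1 < j := by omega
        have hswap : Equiv.swap i j =
            Equiv.swap (i+1) i * Equiv.swap j (i+1) * Equiv.swap (i+1) i := by
          rw [Equiv.swap_mul_swap_mul_swap (x := j) (y := i+1) (z := i) (by omega) (by omega)]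
        rw [hswap]
        have e1 : permSeries (Equiv.swap (i+1) i) f = f := by
          rw [Equiv.swap_comm]; exact hb i (by omega)
        have e2 : permSeries (Equiv.swap j (i+1)) f = f := by
          rw [Equiv.swap_comm]; exact ih (i+1) j h1 hjb (by omega)
        exact perm_inv_mul (perm_inv_mul e1 e2) e1
  intro i j hij hjb
  exact key (j - i).toNat i j hij hjb (by omega)

lemma swap_invariance' (hb : ∀ i : ℤ, i < b → permSeries (Equiv.swap i (i + 1)) f = f) :
    ∀ i j : ℤ, i ≠ j → i ≤ b → j ≤ b → permSeries (Equiv.swap i j) f = f := by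
  intro i j hne hi hj
  rcases lt_or_gt_of_ne hne with h | h
  · exact swap_invariance hb i j h hj
  · rw [Equiv.swap_comm]; exact swap_invariance hb j i h hi
end D1
section D2

lemma find_partner {m m' : ℤ →₀ ℕ} (hsh : shape m = shape m') {j : ℤ}
    (hj : m j ≠ m' j) (hv : m j ≠ 0) :
    ∃ j', m' j' = m j ∧ m j' ≠ m' j' := by
  classical
  set v := m j with hvdef
  set D : Finset ℤ := (m.support ∪ m'.support).filter (fun i => m i ≠ m' i) with hD
  have memD : ∀ i, i ∈ D ↔ m i ≠ m' i := by
    intro i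
    rw [hD, Finset.mem_filter, Finset.mem_union, Finsupp.mem_support_iff, Finsupp.mem_support_iff]
    constructor
    · exact fun h => h.2
    · intro h
      refine ⟨?_, h⟩
      by_contra hc
      push_neg at hc
      exact h (hc.1.trans hc.2.symm)
  have hcount := congrArg (Multiset.count v) hsh
  rw [shape, shape, Multiset.count_map, Multiset.count_map] at hcount
  have e1 : Multiset.card (m.support.val.filter (fun i => v = m i)) =
      (m.support.filter (fun i => v = m i)).card := rfl
  have e2 : Multiset.card (m'.support.val.filter (fun i => v = m' i)) =
      (m'.support.filter (fun i => v = m' i)).card := rfl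
  rw [e1, e2] at hcount
  have hsplit1 := Finset.card_filter_add_card_filter_not
    (s := m.support.filter (fun i => v = m i)) (p := fun i => i ∈ D)
  have hsplit2 := Finset.card_filter_add_card_filter_not
    (s := m'.support.filter (fun i => v = m' i)) (p := fun i => i ∈ D)
  have hB : (m.support.filter (fun i => v = m i)).filter (fun i => ¬ i ∈ D) =
      (m'.support.filter (fun i => v = m' i)).filter (fun i => ¬ i ∈ D) := by
    ext i
    simp only [Finset.mem_filter, Finsupp.mem_support_iff]
    constructor
    · rintro ⟨⟨h1, h2⟩, h3⟩
      have : m i = m' i := by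
        by_contra hc; exact h3 ((memD i).2 hc)
      exact ⟨⟨this ▸ h1, this ▸ h2⟩, h3⟩
    · rintro ⟨⟨h1, h2⟩, h3⟩
      have : m i = m' i := by
        by_contra hc; exact h3 ((memD i).2 hc)
      exact ⟨⟨this.symm ▸ h1, this.symm ▸ h2⟩, h3⟩
  have hA : ((m.support.filter (fun i => v = m i)).filter (fun i => i ∈ D)).card =
      ((m'.support.filter (fun i => v = m' i)).filter (fun i => i ∈ D)).card := by
    rw [hB] at hsplit1
    omega
  have hjA : j ∈ (m.support.filter (fun i => v = m i)).filter (fun i => i ∈ D) := by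
    rw [Finset.mem_filter, Finset.mem_filter, Finsupp.mem_support_iff]
    exact ⟨⟨hv, rfl⟩, (memD j).2 hj⟩
  have hne : ((m'.support.filter (fun i => v = m' i)).filter (fun i => i ∈ D)).Nonempty := by
    rw [← Finset.card_pos, ← hA, Finset.card_pos]
    exact ⟨j, hjA⟩
  obtain ⟨j', hj'⟩ := hne
  rw [Finset.mem_filter, Finset.mem_filter] at hj'
  exact ⟨j', hj'.1.2.symm, (memD j').1 hj'.2⟩
end D2
lemma sort_coeff {g : MvPowerSeries ℤ ℚ} {b : ℤ}
    (hg : ∀ i j : ℤ, i ≠ j → i ≤ b → j ≤ b → permSeries (Equiv.swap i j) g = g) :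
    ∀ (n : ℕ) (m m' : ℤ →₀ ℕ), (∀ i, b < i → m i = 0) → (∀ i, b < i → m' i = 0) →
    shape m = shape m' →
    ((m.support ∪ m'.support).filter (fun i => m i ≠ m' i)).card ≤ n →
    MvPowerSeries.coeff m g = MvPowerSeries.coeff m' g := by
  classical
  intro n
  induction n with
  | zero =>
    intro m m' _ _ _ hcard
    have : m = m' := by
      ext i
      by_contra hc
      have : i ∈ (m.support ∪ m'.support).filter (fun i => m i ≠ m' i) := by
        rw [Finset.mem_filter, Finset.mem_union, Finsupp.mem_support_iff, Finsupp.mem_support_iff]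
        refine ⟨?_, hc⟩
        by_contra h
        push_neg at h
        exact hc (h.1.trans h.2.symm)
      have := Finset.card_pos.2 ⟨i, this⟩
      omega
    rw [this]
  | succ n ih =>
    have step : ∀ (m m' : ℤ →₀ ℕ), (∀ i, b < i → m i = 0) → (∀ i, b < i → m' i = 0) →
        shape m = shape m' →
        ((m.support ∪ m'.support).filter (fun i => m i ≠ m' i)).card ≤ n + 1 →
        ∀ j : ℤ, m j ≠ m' j → m j ≠ 0 →
        MvPowerSeries.coeff m g = MvPowerSeries.coeff m' g := by
      intro m m' hm hm' hsh hcard j hj hv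
      obtain ⟨j', hj'v, hj'D⟩ := find_partner hsh hj hv
      have hjb : j ≤ b := by
        by_contra hb'
        push_neg at hb'
        exact hj ((hm j hb').trans (hm' j hb').symm)
      have hj'b : j' ≤ b := by
        by_contra hb'
        push_neg at hb'
        exact hj'D ((hm j' hb').trans (hm' j' hb').symm)
      have hne : j ≠ j' := by
        intro h
        have := hj'v
        rw [← h] at this
        exact hj this.symm
      set w := Equiv.swap j j' with hw
      set m'' := Finsupp.equivMapDomain w m' with hm''
      have happ : ∀ i, m'' i = m' (w i) := by
        intro i
        rw [hm'', Finsupp.equivMapDomain_apply, hw, Equiv.symm_swap]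
      have hm''j : m'' j = m j := by
        rw [happ, hw, Equiv.swap_apply_left, hj'v]
      have hm''supp : ∀ i, b < i → m'' i = 0 := by
        intro i hi
        rw [happ, hw, Equiv.swap_apply_of_ne_of_ne (by omega) (by omega)]
        exact hm' i hi
      have hsh'' : shape m'' = shape m' := shape_equivMapDomain w m'
      have hco'' : MvPowerSeries.coeff m'' g = MvPowerSeries.coeff m' g := by
        conv_rhs => rw [← hg j j' hne hjb hj'b]
        rfl
      have hsub : (m.support ∪ m''.support).filter (fun i => m i ≠ m'' i) ⊆
          ((m.support ∪ m'.support).filter (fun i => m i ≠ m' i)).erase j := by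
        intro i hi
        rw [Finset.mem_filter] at hi
        have hi2 := hi.2
        rw [Finset.mem_erase]
        by_cases h1 : i = j
        · subst h1
          exact absurd hm''j.symm hi2
        · refine ⟨h1, ?_⟩
          rw [Finset.mem_filter, Finset.mem_union, Finsupp.mem_support_iff,
            Finsupp.mem_support_iff]
          by_cases h2 : i = j'
          · subst h2
            refine ⟨?_, hj'D⟩
            by_contra h
            push_neg at h
            exact hj'D (h.1.trans h.2.symm)
          · have : m'' i = m' i := by
              rw [happ, hw, Equiv.swap_apply_of_ne_of_ne h1 h2]
            rw [this] at hi2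
            refine ⟨?_, hi2⟩
            by_contra h
            push_neg at h
            exact hi2 (h.1.trans h.2.symm)
      have hjmem : j ∈ (m.support ∪ m'.support).filter (fun i => m i ≠ m' i) := by
        rw [Finset.mem_filter, Finset.mem_union, Finsupp.mem_support_iff]
        exact ⟨Or.inl hv, hj⟩
      have hcard'' : ((m.support ∪ m''.support).filter (fun i => m i ≠ m'' i)).card ≤ n := by
        have h1 := Finset.card_le_card hsub
        have h2 := Finset.card_erase_of_mem hjmem
        omega
      rw [ih m m'' hm hm''supp (hsh.trans hsh''.symm) hcard'', hco'']
    intro m m' hm hm' hsh hcard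
    by_cases hD : ((m.support ∪ m'.support).filter (fun i => m i ≠ m' i)) = ∅
    · have : m = m' := by
        ext i
        by_contra hc
        have : i ∈ (m.support ∪ m'.support).filter (fun i => m i ≠ m' i) := by
          rw [Finset.mem_filter, Finset.mem_union, Finsupp.mem_support_iff,
            Finsupp.mem_support_iff]
          refine ⟨?_, hc⟩
          by_contra h
          push_neg at h
          exact hc (h.1.trans h.2.symm)
        rw [hD] at this
        exact absurd this (Finset.notMem_empty i)
      rw [this]
    · obtain ⟨j, hjmem⟩ := Finset.nonempty_of_ne_empty hD
      rw [Finset.mem_filter] at hjmem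
      by_cases hv : m j ≠ 0
      · exact step m m' hm hm' hsh hcard j hjmem.2 hv
      · push_neg at hv
        have hv' : m' j ≠ 0 := by
          intro h
          exact hjmem.2 (hv.trans h.symm)
        have hcard' : ((m'.support ∪ m.support).filter (fun i => m' i ≠ m i)).card ≤ n + 1 := by
          have : (m'.support ∪ m.support).filter (fun i => m' i ≠ m i) =
              (m.support ∪ m'.support).filter (fun i => m i ≠ m' i) := by
            ext i
            rw [Finset.mem_filter, Finset.mem_filter, Finset.union_comm]
            exact and_congr_right fun _ => ne_comm
          rw [this]
          exact hcard
        exact (step m' m hm' hm hsh.symm hcard' j (fun h => hjmem.2 h.symm) hv').symm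
open Classical in
/-- monomial symmetric series on variables `≤ b` for value multiset `l` -/
noncomputable def Mser (l : Multiset ℕ) (b : ℤ) : MvPowerSeries ℤ ℚ :=
  fun m => if shape m = l ∧ ∀ i : ℤ, b < i → m i = 0 then 1 else 0

open Classical in
lemma coeff_Mser (l : Multiset ℕ) (b : ℤ) (m : ℤ →₀ ℕ) :
    MvPowerSeries.coeff m (Mser l b) =
      if shape m = l ∧ ∀ i : ℤ, b < i → m i = 0 then 1 else 0 := rfl

lemma Mser_rec (l : Multiset ℕ) (hl : 0 ∉ l) (b : ℤ) :
    Mser l b = Mser l (b + 1) -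
      ∑ v ∈ l.toFinset, (MvPowerSeries.X (b + 1) : MvPowerSeries ℤ ℚ) ^ v *
        Mser (l.erase v) b := by
  classical
  ext m
  rw [map_sub, map_sum, coeff_Mser, coeff_Mser]
  have hterm : ∀ v ∈ l.toFinset,
      (MvPowerSeries.coeff m) ((MvPowerSeries.X (b + 1) : MvPowerSeries ℤ ℚ) ^ v *
        Mser (l.erase v) b) =
      if m (b + 1) = v ∧ shape (Finsupp.erase (b + 1) m) = l.erase v ∧
          (∀ i : ℤ, b + 1 < i → m i = 0) then 1 else 0 := by
    intro v hv
    have hvne : v ≠ 0 := fun h => hl (h ▸ Multiset.mem_toFinset.1 hv)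
    rw [MvPowerSeries.X_pow_eq, MvPowerSeries.coeff_monomial_mul]
    by_cases hle : Finsupp.single (b + 1) v ≤ m
    · rw [if_pos hle, one_mul, coeff_Mser]
      have hle' : v ≤ m (b + 1) := Finsupp.single_le_iff.1 hle
      apply if_congr _ rfl rfl
      constructor
      · rintro ⟨h1, h2⟩
        have hv1 : m (b + 1) = v := by
          have := h2 (b + 1) (by omega)
          rw [Finsupp.tsub_apply, Finsupp.single_eq_same] at this
          omega
        have herase : m - Finsupp.single (b + 1) v = Finsupp.erase (b + 1) m := by
          ext i
          rw [Finsupp.tsub_apply]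
          by_cases hi : i = b + 1
          · subst hi
            rw [Finsupp.erase_same, Finsupp.single_eq_same, hv1]
            omega
          · rw [Finsupp.erase_ne hi, Finsupp.single_eq_of_ne' (fun h => hi h.symm)]
            omega
        refine ⟨hv1, herase ▸ h1, fun i hi => ?_⟩
        have := h2 i (by omega)
        rw [Finsupp.tsub_apply, Finsupp.single_eq_of_ne' (by omega)] at this
        omega
      · rintro ⟨h1, h2, h3⟩
        have herase : m - Finsupp.single (b + 1) v = Finsupp.erase (b + 1) m := by
          ext i
          rw [Finsupp.tsub_apply]
          by_cases hi : i = b + 1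
          · subst hi
            rw [Finsupp.erase_same, Finsupp.single_eq_same, h1]
            omega
          · rw [Finsupp.erase_ne hi, Finsupp.single_eq_of_ne' (fun h => hi h.symm)]
            omega
        refine ⟨herase ▸ h2, fun i hi => ?_⟩
        rw [Finsupp.tsub_apply]
        by_cases hi' : i = b + 1
        · subst hi'
          rw [Finsupp.single_eq_same, h1]
          omega
        · rw [Finsupp.single_eq_of_ne' (fun h => hi' h.symm)]
          have : m i = 0 := h3 i (by omega)
          omega
    · rw [if_neg hle]
      symm
      rw [if_neg]
      rintro ⟨h1, -⟩
      exact hle (Finsupp.single_le_iff.2 (le_of_eq h1.symm))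
  rw [Finset.sum_congr rfl hterm]
  by_cases hP : ∀ i : ℤ, b + 1 < i → m i = 0
  · by_cases hv0 : m (b + 1) = 0
    · have hsuppb : ∀ i : ℤ, b < i → m i = 0 := by
        intro i hi
        by_cases hi' : i = b + 1
        · exact hi' ▸ hv0
        · exact hP i (by omega)
      have hsum0 : (∑ v ∈ l.toFinset,
          if m (b + 1) = v ∧ shape (Finsupp.erase (b + 1) m) = l.erase v ∧
            (∀ i : ℤ, b + 1 < i → m i = 0) then (1:ℚ) else 0) = 0 := by
        apply Finset.sum_eq_zero
        intro v hv
        rw [if_neg]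
        rintro ⟨h1, -⟩
        have hvne : v ≠ 0 := fun h => hl (h ▸ Multiset.mem_toFinset.1 hv)
        exact hvne (by omega)
      rw [hsum0, sub_zero]
      exact if_congr ⟨fun h => ⟨h.1, hP⟩, fun h => ⟨h.1, hsuppb⟩⟩ rfl rfl
    · have hLHS0 : ¬(shape m = l ∧ ∀ i : ℤ, b < i → m i = 0) := by
        rintro ⟨-, h⟩
        exact hv0 (h (b + 1) (by omega))
      rw [if_neg hLHS0]
      have hshape := shape_erase m (b + 1) hv0
      have hsuppe : ∀ i : ℤ, b < i → (Finsupp.erase (b + 1) m) i = 0 := by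
        intro i hi
        by_cases hi' : i = b + 1
        · subst hi'; exact Finsupp.erase_same
        · rw [Finsupp.erase_ne hi']
          exact hP i (by omega)
      by_cases hsh : shape m = l
      · have hmem : m (b + 1) ∈ l := by
          rw [← hsh, hshape]
          exact Multiset.mem_cons_self _ _
        have hsum1 : (∑ v ∈ l.toFinset,
            if m (b + 1) = v ∧ shape (Finsupp.erase (b + 1) m) = l.erase v ∧
              (∀ i : ℤ, b + 1 < i → m i = 0) then (1:ℚ) else 0) = 1 := by
          rw [Finset.sum_eq_single_of_mem (m (b + 1)) (Multiset.mem_toFinset.2 hmem)]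
          · rw [if_pos]
            refine ⟨rfl, ?_, hP⟩
            have : l = m (b + 1) ::ₘ shape (Finsupp.erase (b + 1) m) := by
              rw [← hsh, hshape]
            rw [this, Multiset.erase_cons_head]
          · intro v _ hvne
            rw [if_neg]
            rintro ⟨h1, -⟩
            exact hvne h1.symm
        rw [hsum1, if_pos ⟨hsh, hP⟩]
        norm_num
      · rw [if_neg (fun h => hsh h.1)]
        have hsum0 : (∑ v ∈ l.toFinset,
            if m (b + 1) = v ∧ shape (Finsupp.erase (b + 1) m) = l.erase v ∧
              (∀ i : ℤ, b + 1 < i → m i = 0) then (1:ℚ) else 0) = 0 := by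
          apply Finset.sum_eq_zero
          intro v hv
          rw [if_neg]
          rintro ⟨h1, h2, -⟩
          apply hsh
          rw [hshape, h1, h2, Multiset.cons_erase (Multiset.mem_toFinset.1 hv)]
        rw [hsum0, sub_zero]
  · push_neg at hP
    obtain ⟨i0, hi0, hi0v⟩ := hP
    have h1 : ¬(shape m = l ∧ ∀ i : ℤ, b < i → m i = 0) := by
      rintro ⟨-, h⟩
      exact hi0v (h i0 (by omega))
    have h2 : ¬(shape m = l ∧ ∀ i : ℤ, b + 1 < i → m i = 0) := by
      rintro ⟨-, h⟩
      exact hi0v (h i0 hi0)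
    have hsum0 : (∑ v ∈ l.toFinset,
        if m (b + 1) = v ∧ shape (Finsupp.erase (b + 1) m) = l.erase v ∧
          (∀ i : ℤ, b + 1 < i → m i = 0) then (1:ℚ) else 0) = 0 := by
      apply Finset.sum_eq_zero
      intro v _
      rw [if_neg]
      rintro ⟨-, -, h⟩
      exact hi0v (h i0 hi0)
    rw [if_neg h1, if_neg h2, hsum0, sub_zero]
lemma Mser_zero_mem (l : Multiset ℕ) : Mser l 0 ∈ SymmNonpos := by
  classical
  have hcond : ∀ m : ℤ →₀ ℕ, MvPowerSeries.coeff m (Mser l 0) ≠ 0 →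
      shape m = l ∧ ∀ i : ℤ, 0 < i → m i = 0 := by
    intro m h
    rw [coeff_Mser] at h
    by_cases hc : shape m = l ∧ ∀ i : ℤ, 0 < i → m i = 0
    · exact hc
    · rw [if_neg hc] at h; exact absurd rfl h
  refine ⟨⟨l.sum, fun m h => ?_⟩, fun m h => (hcond m h).2, fun w _ hfix => ?_⟩
  · rw [degree_eq_shape_sum, (hcond m h).1]
  · ext m
    rw [coeff_permSeries, coeff_Mser, coeff_Mser]
    have hfix' : ∀ i : ℤ, 0 < i → w.symm i = i := by
      intro i hi
      conv_lhs => rw [← hfix i hi]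
      exact w.symm_apply_apply i
    apply if_congr _ rfl rfl
    rw [shape_equivMapDomain]
    apply and_congr_right
    intro _
    constructor
    · intro h i hi
      have := h i hi
      rwa [Finsupp.equivMapDomain_apply, hfix' i hi] at this
    · intro h i hi
      rw [Finsupp.equivMapDomain_apply, hfix' i hi]
      exact h i hi

lemma Mser_mem_adjoin : ∀ (k : ℕ) (l : Multiset ℕ), 0 ∉ l → l.card ≤ k → ∀ c : ℕ,
    Mser l (-(c : ℤ)) ∈ Algebra.adjoin ℚ
      (SymmNonpos ∪ Set.range (MvPowerSeries.X : ℤ → MvPowerSeries ℤ ℚ)) := by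
  intro k
  induction k using Nat.strong_induction_on with
  | _ k ih =>
  intro l hl hcard c
  induction c with
  | zero =>
    have h0 : (-((0:ℕ) : ℤ)) = 0 := by norm_num
    rw [h0]
    exact Algebra.subset_adjoin (Or.inl (Mser_zero_mem l))
  | succ c ihc =>
    have hb : (-((c+1 : ℕ) : ℤ)) + 1 = -(c : ℤ) := by push_cast; ring
    rw [Mser_rec l hl (-((c+1 : ℕ) : ℤ)), hb]
    apply Subalgebra.sub_mem
    · exact ihc
    · apply Subalgebra.sum_mem
      intro v hv
      have hvl : v ∈ l := Multiset.mem_toFinset.1 hv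
      apply Subalgebra.mul_mem
      · apply pow_mem
        apply Algebra.subset_adjoin
        exact Or.inr ⟨_, rfl⟩
      · have hk : 1 ≤ k := le_trans (Multiset.card_pos.2
          (fun h0 => absurd (h0 ▸ hvl) (Multiset.notMem_zero v))) hcard
        exact ih (k-1) (by omega) (l.erase v)
          (fun h => hl (Multiset.mem_of_mem_erase h))
          (by have h1 := Multiset.card_erase_of_mem hvl
              rw [Nat.pred_eq_sub_one] at h1
              omega) (c+1)

lemma card_le_sum_of_ne_zero : ∀ (l : Multiset ℕ), 0 ∉ l → l.card ≤ l.sum := by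
  intro l
  induction l using Multiset.induction_on with
  | empty => intro _; simp
  | cons a s ih =>
    intro h
    rw [Multiset.card_cons, Multiset.sum_cons]
    have ha : a ≠ 0 := fun hc => h (hc ▸ Multiset.mem_cons_self a s)
    have := ih (fun hc => h (Multiset.mem_cons_of_mem hc))
    omega

lemma mem_le_sum : ∀ (l : Multiset ℕ) (v : ℕ), v ∈ l → v ≤ l.sum := by
  intro l
  induction l using Multiset.induction_on with
  | empty => intro v hv; exact absurd hv (Multiset.notMem_zero v)
  | cons a s ih =>
    intro v hv
    rw [Multiset.sum_cons]
    rcases Multiset.mem_cons.1 hv with h | h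
    · omega
    · have := ih v h; omega

lemma exists_rep (l : Multiset ℕ) (hl : 0 ∉ l) : ∀ b : ℤ,
    ∃ m : ℤ →₀ ℕ, (∀ i : ℤ, b < i → m i = 0) ∧ shape m = l := by
  induction l using Multiset.induction_on with
  | empty =>
    intro b
    exact ⟨0, fun i _ => rfl, rfl⟩
  | cons a s ih =>
    intro b
    have ha : a ≠ 0 := fun hc => hl (hc ▸ Multiset.mem_cons_self a s)
    obtain ⟨m', hm'supp, hm'shape⟩ := ih (fun hc => hl (Multiset.mem_cons_of_mem hc)) (b - 1)
    refine ⟨Finsupp.single b a + m', ?_, ?_⟩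
    · intro i hi
      rw [Finsupp.add_apply, Finsupp.single_eq_of_ne' (by omega), hm'supp i (by omega)]
    · have hmb : (Finsupp.single b a + m') b = a := by
        rw [Finsupp.add_apply, Finsupp.single_eq_same, hm'supp b (by omega)]
        omega
      have herase : Finsupp.erase b (Finsupp.single b a + m') = m' := by
        ext i
        by_cases hi : i = b
        · rw [hi, Finsupp.erase_same, (hm'supp b (by omega)).symm]
        · rw [Finsupp.erase_ne hi, Finsupp.add_apply, Finsupp.single_eq_of_ne' (fun h => hi h.symm)]
          omega
      rw [shape_erase _ b (by rw [hmb]; exact ha), hmb, herase, hm'shape]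
lemma symm_series_mem (g : MvPowerSeries ℤ ℚ) (b : ℤ) (hb : b ≤ 0) (K : ℕ)
    (hdeg : ∀ m : ℤ →₀ ℕ, MvPowerSeries.coeff m g ≠ 0 → (m.sum fun _ k => k) ≤ K)
    (hsupp : ∀ m : ℤ →₀ ℕ, (¬ ∀ i : ℤ, b < i → m i = 0) → MvPowerSeries.coeff m g = 0)
    (hsym : ∀ m m' : ℤ →₀ ℕ, (∀ i : ℤ, b < i → m i = 0) → (∀ i : ℤ, b < i → m' i = 0) →
      shape m = shape m' → MvPowerSeries.coeff m g = MvPowerSeries.coeff m' g) :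
    g ∈ Algebra.adjoin ℚ
      (SymmNonpos ∪ Set.range (MvPowerSeries.X : ℤ → MvPowerSeries ℤ ℚ)) := by
  classical
  set s₀ : Multiset ℕ := ∑ v ∈ Finset.Icc 1 K, Multiset.replicate K v with hs₀
  set Λset : Finset (Multiset ℕ) := s₀.powerset.toFinset with hΛ
  have hcount : ∀ v : ℕ, Multiset.count v s₀ = if v ∈ Finset.Icc 1 K then K else 0 := by
    intro v
    rw [hs₀, Multiset.count_sum']
    by_cases hv : v ∈ Finset.Icc 1 K
    · rw [if_pos hv, Finset.sum_eq_single_of_mem v hv]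
      · rw [Multiset.count_replicate, if_pos rfl]
      · intro u _ hu
        rw [Multiset.count_replicate]
        exact if_neg (fun h => hu (by omega))
    · rw [if_neg hv]
      apply Finset.sum_eq_zero
      intro u hu
      rw [Multiset.count_replicate]
      exact if_neg (fun h => hv (by rw [← h]; exact hu))
  have hmemΛ : ∀ l : Multiset ℕ, 0 ∉ l → l.sum ≤ K → l ∈ Λset := by
    intro l h0 hsum
    rw [hΛ, Multiset.mem_toFinset, Multiset.mem_powerset, Multiset.le_iff_count]
    intro v
    rw [hcount]
    by_cases hv : v ∈ Finset.Icc 1 K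
    · rw [if_pos hv]
      calc Multiset.count v l ≤ l.card := Multiset.count_le_card v l
        _ ≤ l.sum := card_le_sum_of_ne_zero l h0
        _ ≤ K := hsum
    · rw [if_neg hv]
      rw [Finset.mem_Icc, not_and_or] at hv
      rcases hv with hv | hv
      · have hv0 : v = 0 := by omega
        rw [hv0, Nat.le_zero, Multiset.count_eq_zero]
        exact h0
      · rw [Nat.le_zero, Multiset.count_eq_zero]
        intro hmem
        exact hv (le_trans (mem_le_sum l v hmem) hsum)
  have hΛ0 : ∀ l ∈ Λset, 0 ∉ l := by
    intro l hlmem h0l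
    rw [hΛ, Multiset.mem_toFinset, Multiset.mem_powerset] at hlmem
    have := Multiset.le_iff_count.1 hlmem 0
    rw [hcount, if_neg (by simp)] at this
    rw [← Multiset.count_pos] at h0l
    omega
  have hex : ∀ l : Multiset ℕ, 0 ∉ l → ∃ m : ℤ →₀ ℕ,
      (∀ i : ℤ, b < i → m i = 0) ∧ shape m = l := fun l hl => exists_rep l hl b
  set cl : Multiset ℕ → ℚ := fun l =>
    if h : 0 ∉ l then MvPowerSeries.coeff (hex l h).choose g else 0 with hcl
  have hclval : ∀ m : ℤ →₀ ℕ, (∀ i : ℤ, b < i → m i = 0) →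
      cl (shape m) = MvPowerSeries.coeff m g := by
    intro m hm
    have h0 : 0 ∉ shape m := fun h => (mem_shape_ne_zero h) rfl
    rw [hcl]
    simp only [dif_pos h0]
    obtain ⟨hc1, hc2⟩ := (hex (shape m) h0).choose_spec
    exact hsym _ m hc1 hm hc2
  have main : g = ∑ l ∈ Λset, cl l • Mser l b := by
    ext m
    rw [map_sum]
    have hterm : ∀ l ∈ Λset, MvPowerSeries.coeff m (cl l • Mser l b) =
        cl l * (if shape m = l ∧ ∀ i : ℤ, b < i → m i = 0 then 1 else 0) := by
      intro l _
      rw [LinearMap.map_smul, coeff_Mser, smul_eq_mul]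
    rw [Finset.sum_congr rfl hterm]
    by_cases hm : ∀ i : ℤ, b < i → m i = 0
    · by_cases hmem : shape m ∈ Λset
      · rw [Finset.sum_eq_single_of_mem (shape m) hmem]
        · rw [if_pos ⟨rfl, hm⟩, mul_one, hclval m hm]
        · intro l _ hne
          rw [if_neg (fun hc => hne hc.1.symm), mul_zero]
      · have hg0 : MvPowerSeries.coeff m g = 0 := by
          by_contra hg
          apply hmem
          apply hmemΛ
          · intro h; exact (mem_shape_ne_zero h) rfl
          · rw [← degree_eq_shape_sum]
            exact hdeg m hg
        rw [hg0]
        symm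
        apply Finset.sum_eq_zero
        intro l hlmem
        have hnc : ¬(shape m = l ∧ ∀ i : ℤ, b < i → m i = 0) := by
          rintro ⟨h1, -⟩
          exact hmem (by rw [h1]; exact hlmem)
        rw [if_neg hnc, mul_zero]
    · rw [hsupp m hm]
      symm
      apply Finset.sum_eq_zero
      intro l _
      rw [if_neg (fun hc => hm hc.2), mul_zero]
  rw [main]
  apply Subalgebra.sum_mem
  intro l hlmem
  apply Subalgebra.smul_mem
  have hbe : b = -(((-b).toNat : ℕ) : ℤ) := by omega
  rw [hbe]
  exact Mser_mem_adjoin l.card l (hΛ0 l hlmem) le_rfl (-b).toNat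
section Converse

lemma permSeries_X (w : Equiv.Perm ℤ) (i : ℤ) :
    permSeries w (MvPowerSeries.X i : MvPowerSeries ℤ ℚ) = MvPowerSeries.X (w.symm i) := by
  classical
  ext m
  rw [coeff_permSeries, MvPowerSeries.coeff_X, MvPowerSeries.coeff_X]
  apply if_congr _ rfl rfl
  constructor
  · intro h
    have := congrArg (Finsupp.equivMapDomain w.symm) h
    rwa [equivMapDomain_symm_comp, Finsupp.equivMapDomain_single] at this
  · intro h
    rw [h, Finsupp.equivMapDomain_single, Equiv.apply_symm_apply]

lemma bddDeg_add {f g : MvPowerSeries ℤ ℚ} (hf : BddDeg f) (hg : BddDeg g) : BddDeg (f + g) := by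
  obtain ⟨M1, h1⟩ := hf
  obtain ⟨M2, h2⟩ := hg
  refine ⟨max M1 M2, fun m hm => ?_⟩
  rw [map_add] at hm
  by_cases hc : MvPowerSeries.coeff m f ≠ 0
  · exact le_trans (h1 m hc) (le_max_left _ _)
  · push_neg at hc
    rw [hc, zero_add] at hm
    exact le_trans (h2 m hm) (le_max_right _ _)

lemma suppBdd_add {f g : MvPowerSeries ℤ ℚ} (hf : SuppBddAbove f) (hg : SuppBddAbove g) :
    SuppBddAbove (f + g) := by
  obtain ⟨N1, h1⟩ := hf
  obtain ⟨N2, h2⟩ := hg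
  refine ⟨max N1 N2, fun m hm i hi => ?_⟩
  rw [map_add] at hm
  by_cases hc : MvPowerSeries.coeff m f ≠ 0
  · exact h1 m hc i (lt_of_le_of_lt (le_max_left _ _) hi)
  · push_neg at hc
    rw [hc, zero_add] at hm
    exact h2 m hm i (lt_of_le_of_lt (le_max_right _ _) hi)

lemma backSym_add {f g : MvPowerSeries ℤ ℚ} (hf : BackSym f) (hg : BackSym g) :
    BackSym (f + g) := by
  obtain ⟨b1, h1⟩ := hf
  obtain ⟨b2, h2⟩ := hg
  refine ⟨min b1 b2, fun i hi => ?_⟩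
  rw [permSeries_add, h1 i (lt_of_lt_of_le hi (min_le_left _ _)),
    h2 i (lt_of_lt_of_le hi (min_le_right _ _))]

lemma degree_add (p q : ℤ →₀ ℕ) :
    ((p + q).sum fun _ k => k) = (p.sum fun _ k => k) + (q.sum fun _ k => k) :=
  Finsupp.sum_add_index' (fun _ => rfl) (fun _ _ _ => rfl)

lemma bddDeg_mul {f g : MvPowerSeries ℤ ℚ} (hf : BddDeg f) (hg : BddDeg g) : BddDeg (f * g) := by
  classical
  obtain ⟨M1, h1⟩ := hf
  obtain ⟨M2, h2⟩ := hg
  refine ⟨M1 + M2, fun m hm => ?_⟩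
  rw [MvPowerSeries.coeff_mul] at hm
  obtain ⟨p, hp, hpne⟩ := Finset.exists_ne_zero_of_sum_ne_zero hm
  rw [Finset.HasAntidiagonal.mem_antidiagonal] at hp
  have hf' := h1 p.1 (left_ne_zero_of_mul hpne)
  have hg' := h2 p.2 (right_ne_zero_of_mul hpne)
  rw [← hp, degree_add]
  omega

lemma suppBdd_mul {f g : MvPowerSeries ℤ ℚ} (hf : SuppBddAbove f) (hg : SuppBddAbove g) :
    SuppBddAbove (f * g) := by
  classical
  obtain ⟨N1, h1⟩ := hf
  obtain ⟨N2, h2⟩ := hg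
  refine ⟨max N1 N2, fun m hm i hi => ?_⟩
  rw [MvPowerSeries.coeff_mul] at hm
  obtain ⟨p, hp, hpne⟩ := Finset.exists_ne_zero_of_sum_ne_zero hm
  rw [Finset.HasAntidiagonal.mem_antidiagonal] at hp
  have hf' := h1 p.1 (left_ne_zero_of_mul hpne) i (lt_of_le_of_lt (le_max_left _ _) hi)
  have hg' := h2 p.2 (right_ne_zero_of_mul hpne) i (lt_of_le_of_lt (le_max_right _ _) hi)
  rw [← hp, Finsupp.add_apply, hf', hg']

lemma backSym_mul {f g : MvPowerSeries ℤ ℚ} (hf : BackSym f) (hg : BackSym g) :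
    BackSym (f * g) := by
  obtain ⟨b1, h1⟩ := hf
  obtain ⟨b2, h2⟩ := hg
  refine ⟨min b1 b2, fun i hi => ?_⟩
  rw [permSeries_mul, h1 i (lt_of_lt_of_le hi (min_le_left _ _)),
    h2 i (lt_of_lt_of_le hi (min_le_right _ _))]

lemma good_algebraMap (r : ℚ) :
    BddDeg (algebraMap ℚ (MvPowerSeries ℤ ℚ) r) ∧
    SuppBddAbove (algebraMap ℚ (MvPowerSeries ℤ ℚ) r) ∧
    BackSym (algebraMap ℚ (MvPowerSeries ℤ ℚ) r) := by
  classical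
  have hC : algebraMap ℚ (MvPowerSeries ℤ ℚ) r = MvPowerSeries.C r := rfl
  rw [hC]
  have hcoeff : ∀ m : ℤ →₀ ℕ, MvPowerSeries.coeff m (MvPowerSeries.C r) ≠ 0 → m = 0 := by
    intro m hm
    rw [MvPowerSeries.coeff_C] at hm
    by_cases h : m = 0
    · exact h
    · rw [if_neg h] at hm; exact absurd rfl hm
  refine ⟨⟨0, fun m hm => ?_⟩, ⟨0, fun m hm i _ => ?_⟩, ⟨0, fun i _ => permSeries_C _ r⟩⟩
  · rw [hcoeff m hm]; simp
  · rw [hcoeff m hm]; rfl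

lemma good_X (i : ℤ) :
    BddDeg (MvPowerSeries.X i : MvPowerSeries ℤ ℚ) ∧
    SuppBddAbove (MvPowerSeries.X i : MvPowerSeries ℤ ℚ) ∧
    BackSym (MvPowerSeries.X i : MvPowerSeries ℤ ℚ) := by
  classical
  have hcoeff : ∀ m : ℤ →₀ ℕ,
      MvPowerSeries.coeff m (MvPowerSeries.X i : MvPowerSeries ℤ ℚ) ≠ 0 →
      m = Finsupp.single i 1 := by
    intro m hm
    rw [MvPowerSeries.coeff_X] at hm
    by_cases h : m = Finsupp.single i 1
    · exact h
    · rw [if_neg h] at hm; exact absurd rfl hm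
  refine ⟨⟨1, fun m hm => ?_⟩, ⟨i, fun m hm j hj => ?_⟩, ⟨i - 1, fun j hj => ?_⟩⟩
  · rw [hcoeff m hm, Finsupp.sum_single_index rfl]
  · rw [hcoeff m hm, Finsupp.single_eq_of_ne' (by omega)]
  · rw [permSeries_X, Equiv.symm_swap, Equiv.swap_apply_of_ne_of_ne (by omega) (by omega)]

lemma good_symmNonpos {g : MvPowerSeries ℤ ℚ} (hg : g ∈ SymmNonpos) :
    BddDeg g ∧ SuppBddAbove g ∧ BackSym g := by
  obtain ⟨h1, h2, h3⟩ := hg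
  refine ⟨h1, ⟨0, h2⟩, ⟨0, fun i hi => ?_⟩⟩
  apply h3
  · apply Set.Finite.subset (Set.Finite.insert i (Set.finite_singleton (i + 1)))
    intro x hx
    rw [Set.mem_setOf_eq] at hx
    by_contra hc
    apply hx
    apply Equiv.swap_apply_of_ne_of_ne
    · intro h; exact hc (by rw [h]; exact Set.mem_insert _ _)
    · intro h; exact hc (by rw [h]; exact Set.mem_insert_of_mem _ rfl)
  · intro j hj
    exact Equiv.swap_apply_of_ne_of_ne (by omega) (by omega)

end Converse
section Forward

lemma monomial_mem (α : ℤ →₀ ℕ) :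
    MvPowerSeries.monomial α (1 : ℚ) ∈ Algebra.adjoin ℚ
      (SymmNonpos ∪ Set.range (MvPowerSeries.X : ℤ → MvPowerSeries ℤ ℚ)) := by
  induction α using Finsupp.induction with
  | zero =>
    rw [MvPowerSeries.monomial_zero_one]
    exact Subalgebra.one_mem _
  | single_add a k β ha hk ih =>
    have : MvPowerSeries.monomial (Finsupp.single a k + β) (1 : ℚ) =
        (MvPowerSeries.X a : MvPowerSeries ℤ ℚ) ^ k * MvPowerSeries.monomial β 1 := by
      rw [MvPowerSeries.X_pow_eq, MvPowerSeries.monomial_mul_monomial, one_mul]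
    rw [this]
    apply Subalgebra.mul_mem
    · apply pow_mem
      apply Algebra.subset_adjoin
      exact Or.inr ⟨_, rfl⟩
    · exact ih
end Forward
lemma forward_mem (f : MvPowerSeries ℤ ℚ) (hdeg : BddDeg f) (hsup : SuppBddAbove f)
    (hbs : BackSym f) : f ∈ Algebra.adjoin ℚ
      (SymmNonpos ∪ Set.range (MvPowerSeries.X : ℤ → MvPowerSeries ℤ ℚ)) := by
  classical
  obtain ⟨M, hM⟩ := hdeg
  obtain ⟨N₀, hN₀⟩ := hsup
  obtain ⟨b₀, hb₀⟩ := hbs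
  set b : ℤ := min b₀ 0 with hbdef
  have hb0 : b ≤ 0 := min_le_right _ _
  have hadj : ∀ i : ℤ, i < b → permSeries (Equiv.swap i (i+1)) f = f :=
    fun i hi => hb₀ i (lt_of_lt_of_le hi (min_le_left _ _))
  have hswap := swap_invariance' hadj
  set N : ℤ := max N₀ b with hNdef
  have hN : ∀ m : ℤ →₀ ℕ, MvPowerSeries.coeff m f ≠ 0 → ∀ i : ℤ, N < i → m i = 0 :=
    fun m hm i hi => hN₀ m hm i (lt_of_le_of_lt (le_max_left _ _) hi)
  set T : ℤ →₀ ℕ := ∑ i ∈ Finset.Icc (b+1) N, Finsupp.single i M with hTdef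
  have hT : ∀ i : ℤ, T i = if i ∈ Finset.Icc (b+1) N then M else 0 := by
    intro i
    rw [hTdef, Finset.sum_apply']
    by_cases hi : i ∈ Finset.Icc (b+1) N
    · rw [if_pos hi, Finset.sum_eq_single_of_mem i hi]
      · rw [Finsupp.single_eq_same]
      · intro j _ hj; exact Finsupp.single_eq_of_ne' hj
    · rw [if_neg hi]
      apply Finset.sum_eq_zero
      intro j hj
      apply Finsupp.single_eq_of_ne'
      intro h; rw [h] at hj; exact hi hj
  set cser : (ℤ →₀ ℕ) → MvPowerSeries ℤ ℚ := fun α m =>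
    if ∀ i : ℤ, b < i → m i = 0 then MvPowerSeries.coeff (m + α) f else 0 with hcser
  have coeff_cser : ∀ (α p : ℤ →₀ ℕ), MvPowerSeries.coeff p (cser α) =
      if ∀ i : ℤ, b < i → p i = 0 then MvPowerSeries.coeff (p + α) f else 0 :=
    fun α p => rfl
  have hαlow : ∀ α : ℤ →₀ ℕ, α ≤ T → ∀ i : ℤ, i ≤ b → α i = 0 := by
    intro α hα i hi
    have h1 : α i ≤ T i := hα i
    rw [hT i, if_neg (by rw [Finset.mem_Icc]; omega)] at h1
    omega
  have hcser_mem : ∀ α : ℤ →₀ ℕ, α ≤ T → cser α ∈ Algebra.adjoin ℚ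
      (SymmNonpos ∪ Set.range (MvPowerSeries.X : ℤ → MvPowerSeries ℤ ℚ)) := by
    intro α hα
    apply symm_series_mem (cser α) b hb0 M
    · intro p hp
      rw [coeff_cser] at hp
      by_cases hc : ∀ i : ℤ, b < i → p i = 0
      · rw [if_pos hc] at hp
        have h2 := hM _ hp
        rw [degree_add] at h2
        omega
      · rw [if_neg hc] at hp; exact absurd rfl hp
    · intro p hp; rw [coeff_cser, if_neg hp]
    · have hinv : ∀ i j : ℤ, i ≠ j → i ≤ b → j ≤ b →
          permSeries (Equiv.swap i j) (cser α) = cser α := by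
        intro i j hne hi hj
        ext m
        rw [coeff_permSeries, coeff_cser, coeff_cser]
        have happ : ∀ x : ℤ, (Finsupp.equivMapDomain (Equiv.swap i j) m) x =
            m (Equiv.swap i j x) := by
          intro x; rw [Finsupp.equivMapDomain_apply, Equiv.symm_swap]
        have hcond : (∀ x : ℤ, b < x → (Finsupp.equivMapDomain (Equiv.swap i j) m) x = 0) ↔
            (∀ x : ℤ, b < x → m x = 0) := by
          constructor
          · intro h x hx
            have := h x hx
            rwa [happ, Equiv.swap_apply_of_ne_of_ne (by omega) (by omega)] at this
          · intro h x hx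
            rw [happ, Equiv.swap_apply_of_ne_of_ne (by omega) (by omega)]
            exact h x hx
        by_cases hc : ∀ x : ℤ, b < x → m x = 0
        · rw [if_pos (hcond.2 hc), if_pos hc]
          have heq : Finsupp.equivMapDomain (Equiv.swap i j) m + α =
              Finsupp.equivMapDomain (Equiv.swap i j) (m + α) := by
            ext x
            rw [Finsupp.add_apply, happ, Finsupp.equivMapDomain_apply, Equiv.symm_swap,
              Finsupp.add_apply]
            congr 1
            by_cases hx : x = i
            · rw [hx, Equiv.swap_apply_left, hαlow α hα j hj, hαlow α hα i hi]
            · by_cases hx' : x = j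
              · rw [hx', Equiv.swap_apply_right, hαlow α hα i hi, hαlow α hα j hj]
              · rw [Equiv.swap_apply_of_ne_of_ne hx hx']
          rw [heq]
          conv_rhs => rw [← hswap i j hne hi hj]
          rfl
        · rw [if_neg (fun h => hc (hcond.1 h)), if_neg hc]
      intro p p' hp hp' hsh
      exact sort_coeff hinv ((p.support ∪ p'.support).filter (fun i => p i ≠ p' i)).card
        p p' hp hp' hsh le_rfl
  have main : f = ∑ α ∈ Finset.Iic T, MvPowerSeries.monomial α 1 * cser α := by
    ext m
    rw [map_sum]
    set hi_m : ℤ →₀ ℕ := m.filter (fun i => b < i) with hhim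
    have hhim_app : ∀ i : ℤ, hi_m i = if b < i then m i else 0 := fun i => rfl
    have hhim_le : hi_m ≤ m := by
      intro i
      rw [hhim_app]
      split
      · exact le_rfl
      · exact Nat.zero_le _
    have hterm : ∀ α ∈ Finset.Iic T,
        MvPowerSeries.coeff m (MvPowerSeries.monomial α 1 * cser α) =
        if α = hi_m then MvPowerSeries.coeff m f else 0 := by
      intro α hαmem
      have hα : α ≤ T := Finset.mem_Iic.1 hαmem
      rw [MvPowerSeries.coeff_monomial_mul]
      by_cases hle : α ≤ m
      · rw [if_pos hle, one_mul, coeff_cser]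
        by_cases hcond : ∀ i : ℤ, b < i → (m - α) i = 0
        · have hαeq : α = hi_m := by
            ext i
            rw [hhim_app]
            by_cases hbi : b < i
            · rw [if_pos hbi]
              have h1 := hcond i hbi
              rw [Finsupp.tsub_apply] at h1
              have h2 : α i ≤ m i := hle i
              omega
            · rw [if_neg hbi]
              exact hαlow α hα i (by omega)
          rw [if_pos hcond, if_pos hαeq, tsub_add_cancel_of_le hle]
        · rw [if_neg hcond]
          symm
          rw [if_neg]
          intro hc
          apply hcond
          intro i hbi
          rw [Finsupp.tsub_apply, hc, hhim_app, if_pos hbi]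
          omega
      · rw [if_neg hle]
        symm
        rw [if_neg]
        intro hc
        exact hle (hc ▸ hhim_le)
    rw [Finset.sum_congr rfl hterm]
    by_cases hmem : hi_m ∈ Finset.Iic T
    · rw [Finset.sum_eq_single_of_mem hi_m hmem, if_pos rfl]
      intro α _ hne
      rw [if_neg hne]
    · have hf0 : MvPowerSeries.coeff m f = 0 := by
        by_contra hg
        apply hmem
        rw [Finset.mem_Iic]
        intro i
        rw [hhim_app, hT]
        by_cases hbi : b < i
        · rw [if_pos hbi]
          by_cases hiN : i ≤ N
          · rw [if_pos (by rw [Finset.mem_Icc]; omega)]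
            exact le_trans (apply_le_degree m i) (hM m hg)
          · rw [hN m hg i (by omega)]
            exact Nat.zero_le _
        · rw [if_neg hbi]
          exact Nat.zero_le _
      rw [hf0]
      symm
      apply Finset.sum_eq_zero
      intro α hαmem
      rw [if_neg]
      intro hc
      rw [hc] at hαmem
      exact hmem hαmem
  rw [main]
  apply Subalgebra.sum_mem
  intro α hαmem
  exact Subalgebra.mul_mem _ (monomial_mem α) (hcser_mem α (Finset.mem_Iic.1 hαmem))

/-- The back symmetric formal power series ring equals `Λ ⊗ ℚ[x]`: a formal
power series of bounded total degree, with variables bounded above, is back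
symmetric if and only if it lies in the subalgebra generated by the symmetric
functions in the nonpositive variables together with the individual variables
`x_i`; conversely every element of that subalgebra is such a back symmetric
series. -/
theorem backSymmetric_eq_lambda_tensor_poly :
    (∀ f : MvPowerSeries ℤ ℚ, BddDeg f → SuppBddAbove f → BackSym f →
      f ∈ Algebra.adjoin ℚ
        (SymmNonpos ∪ Set.range (MvPowerSeries.X : ℤ → MvPowerSeries ℤ ℚ))) ∧
    (∀ f ∈ Algebra.adjoin ℚ
        (SymmNonpos ∪ Set.range (MvPowerSeries.X : ℤ → MvPowerSeries ℤ ℚ)),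
      BddDeg f ∧ SuppBddAbove f ∧ BackSym f) := by
  constructor
  · exact fun f hd hs hb => forward_mem f hd hs hb
  · intro f hf
    induction hf using Algebra.adjoin_induction with
    | mem x hx =>
      rcases hx with hx | ⟨i, rfl⟩
      · exact good_symmNonpos hx
      · exact good_X i
    | algebraMap r => exact good_algebraMap r
    | add x y _ _ hx hy =>
      exact ⟨bddDeg_add hx.1 hy.1, suppBdd_add hx.2.1 hy.2.1, backSym_add hx.2.2 hy.2.2⟩
    | mul x y _ _ hx hy =>
      exact ⟨bddDeg_mul hx.1 hy.1, suppBdd_mul hx.2.1 hy.2.1, backSym_mul hx.2.2 hy.2.2⟩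
end

section
/- Every nonempty ribbon skew shape $\lambda/\mu$ admits exactly two decompositions as $\lambda/\rho$ a vertical strip and $\rho/\mu$ a horizontal strip (for a partition $\rho$ with $\mu \subseteq \rho \subseteq \lambda$). -/
/-- The cells of the skew shape `λ/μ`. -/
def skewCells (μ lam : YoungDiagram) : Finset (ℕ × ℕ) := lam.cells \ μ.cells

/-- Two cells are (edgewise) adjacent. -/
def Adj (c d : ℕ × ℕ) : Prop :=
  (c.1 = d.1 ∧ (c.2 = d.2 + 1 ∨ d.2 = c.2 + 1)) ∨
  (c.2 = d.2 ∧ (c.1 = d.1 + 1 ∨ d.1 = c.1 + 1))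

/-- A set of cells is edgewise connected. -/
def ConnectedCells (s : Finset (ℕ × ℕ)) : Prop :=
  ∀ c ∈ s, ∀ d ∈ s,
    Relation.ReflTransGen (fun a b => a ∈ s ∧ b ∈ s ∧ Adj a b) c d

/-- A set of cells contains no `2 × 2` square. -/
def NoSquare (s : Finset (ℕ × ℕ)) : Prop :=
  ∀ i j : ℕ, ¬((i, j) ∈ s ∧ (i + 1, j) ∈ s ∧ (i, j + 1) ∈ s ∧ (i + 1, j + 1) ∈ s)

/-- A set of cells is a vertical strip: at most one box per row. -/
def VStrip (s : Finset (ℕ × ℕ)) : Prop :=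
  ∀ p ∈ s, ∀ q ∈ s, p.1 = q.1 → p = q

/-- A set of cells is a horizontal strip: at most one box per column. -/
def HStrip (s : Finset (ℕ × ℕ)) : Prop :=
  ∀ p ∈ s, ∀ q ∈ s, p.2 = q.2 → p = q

namespace RibbonAux

lemma mem_skew {μ lam : YoungDiagram} {i j : ℕ} :
    (i, j) ∈ skewCells μ lam ↔ μ.rowLen i ≤ j ∧ j < lam.rowLen i := by
  simp only [skewCells, Finset.mem_sdiff, YoungDiagram.mem_cells,
    YoungDiagram.mem_iff_lt_rowLen, not_lt]
  tauto

lemma ivt {s : Finset (ℕ × ℕ)} {x y : ℕ × ℕ}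
    (h : Relation.ReflTransGen (fun a b => a ∈ s ∧ b ∈ s ∧ Adj a b) x y)
    {n : ℕ} (hx : x.1 ≤ n) :
    n < y.1 → ∃ c, (n, c) ∈ s ∧ (n + 1, c) ∈ s := by
  induction h with
  | refl => intro h'; exact absurd (lt_of_le_of_lt hx h') (lt_irrefl _)
  | @tail b c _ hbc ih =>
    intro hc
    by_cases hb : n < b.1
    · exact ih hb
    · push_neg at hb
      obtain ⟨hbs, hcs, hadj⟩ := hbc
      rcases hadj with ⟨h1, _⟩ | ⟨h2, h3⟩
      · omega
      · have hc1 : c.1 = b.1 + 1 := by omega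
        have hbn : b.1 = n := by omega
        refine ⟨b.2, ?_, ?_⟩
        · have he : (n, b.2) = b := by rw [← hbn]
          rwa [he]
        · have he : (n + 1, b.2) = c := by
            have : c.2 = b.2 := h2.symm
            rw [← hbn, ← hc1, ← this]
          rwa [he]

lemma interval {μ lam : YoungDiagram} (hconn : ConnectedCells (skewCells μ lam))
    {i k m x y : ℕ} (hx : (i, x) ∈ skewCells μ lam) (hy : (k, y) ∈ skewCells μ lam)
    (h1 : i ≤ m) (h2 : m ≤ k) : ∃ c, (m, c) ∈ skewCells μ lam := by
  rcases Nat.eq_or_lt_of_le h1 with rfl | h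
  · exact ⟨x, hx⟩
  · obtain ⟨c, _, hc⟩ := ivt (hconn _ hx _ hy) (n := m - 1) (by simpa using by omega)
      (by simpa using by omega)
    have he : m - 1 + 1 = m := by omega
    exact ⟨c, he ▸ hc⟩

lemma consec {μ lam : YoungDiagram} (hconn : ConnectedCells (skewCells μ lam))
    (hsq : NoSquare (skewCells μ lam)) {i : ℕ}
    (hi : μ.rowLen i < lam.rowLen i) (hi1 : μ.rowLen (i + 1) < lam.rowLen (i + 1)) :
    lam.rowLen (i + 1) = μ.rowLen i + 1 := by
  obtain ⟨c, hc1, hc2⟩ := ivt (hconn _ (mem_skew.mpr ⟨le_refl _, hi⟩)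
      _ (mem_skew.mpr ⟨le_refl _, hi1⟩)) (n := i) (le_refl _) (by simp)
  rw [mem_skew] at hc1 hc2
  have hb : lam.rowLen (i + 1) ≤ lam.rowLen i := lam.rowLen_anti i (i + 1) (by omega)
  have ha : μ.rowLen (i + 1) ≤ μ.rowLen i := μ.rowLen_anti i (i + 1) (by omega)
  by_contra hne
  exact hsq i (μ.rowLen i) ⟨mem_skew.mpr ⟨by omega, by omega⟩,
    mem_skew.mpr ⟨by omega, by omega⟩, mem_skew.mpr ⟨by omega, by omega⟩,
    mem_skew.mpr ⟨by omega, by omega⟩⟩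

/-- The candidate diagram: remove from `lam` the last cell of each ribbon row,
except in rows satisfying `e`. -/
def rhoCells (μ lam : YoungDiagram) (e : ℕ → Prop) [DecidablePred e] : Finset (ℕ × ℕ) :=
  lam.cells.filter (fun c => c.2 + 1 < lam.rowLen c.1 ∨ c.2 < μ.rowLen c.1 ∨ e c.1)

lemma mem_rhoCells {μ lam : YoungDiagram} {e : ℕ → Prop} [DecidablePred e] {i j : ℕ} :
    (i, j) ∈ rhoCells μ lam e ↔
      j < lam.rowLen i ∧ (j + 1 < lam.rowLen i ∨ j < μ.rowLen i ∨ e i) := by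
  simp [rhoCells, YoungDiagram.mem_iff_lt_rowLen]

lemma rho_isLowerSet {μ lam : YoungDiagram} (e : ℕ → Prop) [DecidablePred e]
    (he : ∀ k, e k → ∀ j, μ.rowLen j < lam.rowLen j → k ≤ j) :
    IsLowerSet (↑(rhoCells μ lam e) : Set (ℕ × ℕ)) := by
  rintro ⟨i, j⟩ ⟨i', j'⟩ ⟨hi : i' ≤ i, hj : j' ≤ j⟩ ha
  simp only [Finset.mem_coe, mem_rhoCells] at ha ⊢
  obtain ⟨haj, hcond⟩ := ha
  have hb_anti : lam.rowLen i ≤ lam.rowLen i' := lam.rowLen_anti _ _ hi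
  have ha_anti : μ.rowLen i ≤ μ.rowLen i' := μ.rowLen_anti _ _ hi
  refine ⟨by omega, ?_⟩
  by_cases h1 : j' + 1 < lam.rowLen i'
  · exact Or.inl h1
  by_cases h2 : j' < μ.rowLen i'
  · exact Or.inr (Or.inl h2)
  right; right
  push_neg at h1 h2
  have hribi' : μ.rowLen i' < lam.rowLen i' := by omega
  have hei : e i := by
    rcases hcond with h | h | h
    · omega
    · omega
    · exact h
  have : i ≤ i' := he i hei i' hribi'
  have hii : i = i' := le_antisymm this hi
  exact hii ▸ hei

/-- The candidate Young diagram. -/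
def rhoYD (μ lam : YoungDiagram) (e : ℕ → Prop) [DecidablePred e]
    (he : ∀ k, e k → ∀ j, μ.rowLen j < lam.rowLen j → k ≤ j) : YoungDiagram :=
  ⟨rhoCells μ lam e, rho_isLowerSet e he⟩

lemma hstrip_aux {μ lam : YoungDiagram} (hconn : ConnectedCells (skewCells μ lam))
    (hsq : NoSquare (skewCells μ lam)) (e : ℕ → Prop) [DecidablePred e]
    (he : ∀ k, e k → ∀ j, μ.rowLen j < lam.rowLen j → k ≤ j)
    {i i' j : ℕ} (hp : (i, j) ∈ rhoCells μ lam e \ μ.cells)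
    (hq : (i', j) ∈ rhoCells μ lam e \ μ.cells) (hlt : i < i') : False := by
  rw [Finset.mem_sdiff, mem_rhoCells, YoungDiagram.mem_cells,
    YoungDiagram.mem_iff_lt_rowLen] at hp hq
  push_neg at hp hq
  obtain ⟨⟨hjb, hcond⟩, hja⟩ := hp
  obtain ⟨⟨hjb', hcond'⟩, hja'⟩ := hq
  have hskew : (i, j) ∈ skewCells μ lam := mem_skew.mpr ⟨hja, hjb⟩
  have hskew' : (i', j) ∈ skewCells μ lam := mem_skew.mpr ⟨hja', hjb'⟩
  obtain ⟨c, hc⟩ := interval hconn (m := i + 1) hskew hskew' (by omega) (by omega)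
  have hrib1 : μ.rowLen (i + 1) < lam.rowLen (i + 1) := by
    rw [mem_skew] at hc; omega
  have hcons : lam.rowLen (i + 1) = μ.rowLen i + 1 :=
    consec hconn hsq (by omega) hrib1
  have hble : lam.rowLen i' ≤ lam.rowLen (i + 1) := lam.rowLen_anti _ _ (by omega)
  have hei' : e i' := by
    rcases hcond' with h | h | h
    · omega
    · omega
    · exact h
  have : i' ≤ i := he i' hei' i (by omega)
  omega

lemma rho_mem_S {μ lam : YoungDiagram} (hsub : μ.cells ⊆ lam.cells)
    (hconn : ConnectedCells (skewCells μ lam)) (hsq : NoSquare (skewCells μ lam))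
    (e : ℕ → Prop) [DecidablePred e]
    (he : ∀ k, e k → ∀ j, μ.rowLen j < lam.rowLen j → k ≤ j) :
    μ.cells ⊆ (rhoYD μ lam e he).cells ∧ (rhoYD μ lam e he).cells ⊆ lam.cells ∧
      VStrip (lam.cells \ (rhoYD μ lam e he).cells) ∧
      HStrip ((rhoYD μ lam e he).cells \ μ.cells) := by
  refine ⟨?_, Finset.filter_subset _ _, ?_, ?_⟩
  · rintro ⟨i, j⟩ hm
    rw [YoungDiagram.mem_cells, YoungDiagram.mem_iff_lt_rowLen] at hm
    have : (i, j) ∈ lam.cells := hsub (by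
      rw [YoungDiagram.mem_cells, YoungDiagram.mem_iff_lt_rowLen]; exact hm)
    rw [YoungDiagram.mem_cells, YoungDiagram.mem_iff_lt_rowLen] at this
    show (i, j) ∈ rhoCells μ lam e
    rw [mem_rhoCells]
    exact ⟨this, Or.inr (Or.inl hm)⟩
  · rintro ⟨i, j⟩ hp ⟨i', j'⟩ hq hfst
    rw [Finset.mem_sdiff] at hp hq
    obtain ⟨hp1, hp2⟩ := hp
    obtain ⟨hq1, hq2⟩ := hq
    rw [YoungDiagram.mem_cells, YoungDiagram.mem_iff_lt_rowLen] at hp1 hq1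
    have hp2' : (i, j) ∉ rhoCells μ lam e := hp2
    have hq2' : (i', j') ∉ rhoCells μ lam e := hq2
    rw [mem_rhoCells] at hp2' hq2'
    push_neg at hp2' hq2'
    simp only at hfst
    subst hfst
    have h1 := hp2' hp1
    have h2 := hq2' hq1
    have : j = j' := by omega
    simp [this]
  · rintro ⟨i, j⟩ hp ⟨i', j'⟩ hq hsnd
    simp only at hsnd
    subst hsnd
    rcases lt_trichotomy i i' with h | h | h
    · exact absurd (hstrip_aux hconn hsq e he hp hq h) (by simp)
    · simp [h]
    · exact absurd (hstrip_aux hconn hsq e he hq hp h) (by simp)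

lemma unique {μ lam : YoungDiagram} (hsub : μ.cells ⊆ lam.cells)
    (hconn : ConnectedCells (skewCells μ lam)) (hsq : NoSquare (skewCells μ lam))
    {i0 : ℕ} (hi0 : μ.rowLen i0 < lam.rowLen i0)
    (hmin : ∀ j, μ.rowLen j < lam.rowLen j → i0 ≤ j)
    {ρ : YoungDiagram} (h1 : μ.cells ⊆ ρ.cells) (h2 : ρ.cells ⊆ lam.cells)
    (h3 : VStrip (lam.cells \ ρ.cells)) (h4 : HStrip (ρ.cells \ μ.cells)) :
    ρ.cells = rhoCells μ lam (fun _ => False) ∨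
      ρ.cells = rhoCells μ lam (fun k => k = i0) := by
  have hU1 : ∀ i j : ℕ, j + 1 < lam.rowLen i → (i, j) ∈ ρ := by
    intro i j hj
    by_contra hn
    have hn' : (i, j + 1) ∉ ρ := fun hm => hn (ρ.up_left_mem (le_refl i) (by omega) hm)
    have hl1 : (i, j) ∈ lam.cells := by
      rw [YoungDiagram.mem_cells, YoungDiagram.mem_iff_lt_rowLen]; omega
    have hl2 : (i, j + 1) ∈ lam.cells := by
      rw [YoungDiagram.mem_cells, YoungDiagram.mem_iff_lt_rowLen]; omega
    have := h3 (i, j) (Finset.mem_sdiff.mpr ⟨hl1, hn⟩)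
      (i, j + 1) (Finset.mem_sdiff.mpr ⟨hl2, hn'⟩) rfl
    simp at this
  have hU2 : ∀ i : ℕ, i0 < i → μ.rowLen i < lam.rowLen i →
      (i, lam.rowLen i - 1) ∉ ρ := by
    intro i hlt hrib
    obtain ⟨i', rfl⟩ : ∃ i', i = i' + 1 := ⟨i - 1, by omega⟩
    obtain ⟨c, hc⟩ := interval hconn (m := i') (mem_skew.mpr ⟨le_refl _, hi0⟩)
      (mem_skew.mpr ⟨le_refl _, hrib⟩) (by omega) (by omega)
    have hribi' : μ.rowLen i' < lam.rowLen i' := by rw [mem_skew] at hc; omega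
    have hcons : lam.rowLen (i' + 1) = μ.rowLen i' + 1 := consec hconn hsq hribi' hrib
    intro hmem
    have hmem' : (i' + 1, μ.rowLen i') ∈ ρ := by
      have : lam.rowLen (i' + 1) - 1 = μ.rowLen i' := by omega
      rwa [this] at hmem
    have hup : (i', μ.rowLen i') ∈ ρ := ρ.up_left_mem (by omega) (le_refl _) hmem'
    have ha : μ.rowLen (i' + 1) ≤ μ.rowLen i' := μ.rowLen_anti _ _ (by omega)
    have hd1 : (i' + 1, μ.rowLen i') ∈ ρ.cells \ μ.cells := by
      rw [Finset.mem_sdiff]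
      refine ⟨hmem', ?_⟩
      rw [YoungDiagram.mem_cells, YoungDiagram.mem_iff_lt_rowLen]
      omega
    have hd2 : (i', μ.rowLen i') ∈ ρ.cells \ μ.cells := by
      rw [Finset.mem_sdiff]
      refine ⟨hup, ?_⟩
      rw [YoungDiagram.mem_cells, YoungDiagram.mem_iff_lt_rowLen]
      omega
    have := h4 _ hd1 _ hd2 rfl
    simp at this
  by_cases hcase : (i0, lam.rowLen i0 - 1) ∈ ρ
  · right
    ext ⟨i, j⟩
    rw [mem_rhoCells]
    constructor
    · intro hm
      have hl : j < lam.rowLen i := by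
        have := h2 hm
        rwa [YoungDiagram.mem_cells, YoungDiagram.mem_iff_lt_rowLen] at this
      refine ⟨hl, ?_⟩
      by_contra hc
      push_neg at hc
      obtain ⟨hc1, hc2, hc3⟩ := hc
      have hrib : μ.rowLen i < lam.rowLen i := by omega
      have hilt : i0 < i := lt_of_le_of_ne (hmin i hrib) (Ne.symm hc3)
      have hjj : j = lam.rowLen i - 1 := by omega
      exact hU2 i hilt hrib (hjj ▸ hm)
    · rintro ⟨hl, hc⟩
      rcases hc with h | h | h
      · exact hU1 i j h
      · exact h1 (by rw [YoungDiagram.mem_cells, YoungDiagram.mem_iff_lt_rowLen]; exact h)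
      · subst h
        exact ρ.up_left_mem (le_refl i) (by omega) hcase
  · left
    ext ⟨i, j⟩
    rw [mem_rhoCells]
    constructor
    · intro hm
      have hl : j < lam.rowLen i := by
        have := h2 hm
        rwa [YoungDiagram.mem_cells, YoungDiagram.mem_iff_lt_rowLen] at this
      refine ⟨hl, ?_⟩
      by_contra hc
      push_neg at hc
      obtain ⟨hc1, hc2⟩ := hc
      have hrib : μ.rowLen i < lam.rowLen i := by omega
      have hjj : j = lam.rowLen i - 1 := by omega
      rcases Nat.eq_or_lt_of_le (hmin i hrib) with rfl | hilt
      · exact hcase (hjj ▸ hm)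
      · exact hU2 i hilt hrib (hjj ▸ hm)
    · rintro ⟨hl, hc⟩
      rcases hc with h | h | h
      · exact hU1 i j h
      · exact h1 (by rw [YoungDiagram.mem_cells, YoungDiagram.mem_iff_lt_rowLen]; exact h)
      · exact h.elim

end RibbonAux

/-- A nonempty ribbon `λ/μ` admits exactly two decompositions into a vertical
strip `λ/ρ` on top of a horizontal strip `ρ/μ`. -/
theorem ribbon_two_decompositions (μ lam : YoungDiagram)
    (hsub : μ.cells ⊆ lam.cells) (hne : (skewCells μ lam).Nonempty)
    (hconn : ConnectedCells (skewCells μ lam)) (hsq : NoSquare (skewCells μ lam)) :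
    Set.ncard {ρ : YoungDiagram | μ.cells ⊆ ρ.cells ∧ ρ.cells ⊆ lam.cells ∧
        VStrip (lam.cells \ ρ.cells) ∧ HStrip (ρ.cells \ μ.cells)} = 2 := by
  classical
  open RibbonAux in
  obtain ⟨p0, hp0⟩ := hne
  have hT : (Finset.image Prod.fst (skewCells μ lam)).Nonempty :=
    ⟨p0.1, Finset.mem_image_of_mem _ hp0⟩
  set i0 := (Finset.image Prod.fst (skewCells μ lam)).min' hT with hi0def
  have hi0rib : μ.rowLen i0 < lam.rowLen i0 := by
    have hm := (Finset.image Prod.fst (skewCells μ lam)).min'_mem hT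
    rw [Finset.mem_image] at hm
    obtain ⟨⟨a, b⟩, hab, hfst⟩ := hm
    rw [mem_skew] at hab
    rw [← hi0def] at hfst
    simp only at hfst
    rw [← hfst]
    omega
  have hmin : ∀ j, μ.rowLen j < lam.rowLen j → i0 ≤ j := by
    intro j hj
    exact Finset.min'_le _ _ (Finset.mem_image_of_mem _
      (mem_skew.mpr ⟨le_refl _, hj⟩) : j ∈ _)
  have he1 : ∀ k, (fun _ : ℕ => False) k → ∀ j, μ.rowLen j < lam.rowLen j → k ≤ j :=
    fun k hk => hk.elim
  have he2 : ∀ k, (fun m : ℕ => m = i0) k → ∀ j, μ.rowLen j < lam.rowLen j → k ≤ j :=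
    fun k hk j hj => hk ▸ hmin j hj
  set ρ1 : YoungDiagram := rhoYD μ lam (fun _ => False) he1 with hρ1
  set ρ2 : YoungDiagram := rhoYD μ lam (fun k => k = i0) he2 with hρ2
  have hρ1c : ρ1.cells = rhoCells μ lam (fun _ => False) := rfl
  have hρ2c : ρ2.cells = rhoCells μ lam (fun k => k = i0) := rfl
  have hONE : ρ1 ≠ ρ2 := by
    intro h
    have hmem2 : (i0, lam.rowLen i0 - 1) ∈ ρ2.cells := by
      rw [hρ2c, mem_rhoCells]
      exact ⟨by omega, Or.inr (Or.inr rfl)⟩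
    rw [← h, hρ1c, mem_rhoCells] at hmem2
    rcases hmem2.2 with h' | h' | h'
    · omega
    · omega
    · exact h'
  have hset : {ρ : YoungDiagram | μ.cells ⊆ ρ.cells ∧ ρ.cells ⊆ lam.cells ∧
      VStrip (lam.cells \ ρ.cells) ∧ HStrip (ρ.cells \ μ.cells)} = {ρ1, ρ2} := by
    ext ρ
    simp only [Set.mem_setOf_eq, Set.mem_insert_iff, Set.mem_singleton_iff]
    constructor
    · rintro ⟨h1, h2, h3, h4⟩
      rcases unique hsub hconn hsq hi0rib hmin h1 h2 h3 h4 with h | h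
      · left; exact YoungDiagram.ext (hρ1c ▸ h)
      · right; exact YoungDiagram.ext (hρ2c ▸ h)
    · rintro (rfl | rfl)
      · exact rho_mem_S hsub hconn hsq _ he1
      · exact rho_mem_S hsub hconn hsq _ he2
  rw [hset]
  exact Set.ncard_pair hONE
end
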